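/- arXiv:1704.07255 — 4 statements merged into one kernel-verified Lean document; each statement's English description precedes it below -/
import Mathlib

section
/- Let M be a σ-finite von Neumann algebra, φ a normal faithful state on M, and D = ⊕_{j∈J} C e_j a finite dimensional abelian *-subalgebra where (e_j) are the nonzero minimal projections. For a family of finite dimensional abelian *-subalgebras A_j ⊆ e_j M e_j, the direct sum A = ⊕_{j∈J} A_j is a finite dimensional abelian *-subalgebra of M containing D, and for any x ∈ M, the φ-norm identity ‖E^φ_{A'∩M}(x) − E^φ_A(x)‖_φ² = Σ_{j∈J} φ(e_j) ‖E^{φ_{e_j}}_{A_j'∩e_jMe_j}(e_j x e_j) − E^{φ_{e_j}}_{A_j}(e_j x e_j)‖²_{φ_{e_j}} holds, where φ_{e_j} = φ(e_j · e_j)/φ(e_j). -/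
open scoped ComplexOrder
open Filter

noncomputable section

namespace HoudayerPopa

variable (H : Type) [NormedAddCommGroup H] [InnerProductSpace ℂ H] [CompleteSpace H]

/-- Bounded operators on `H`. -/
abbrev BH := H →L[ℂ] H

variable {H}

/-- A normal faithful state on a von Neumann algebra `M ⊆ B(H)`.  Normality is encoded by the
standard characterization: the state is implemented by a square-summable sequence of vectors. -/
structure NFState (M : VonNeumannAlgebra H) where
  toFun : BH H →ₗ[ℂ] ℂ
  map_one' : toFun 1 = 1
  pos' : ∀ x : BH H, 0 ≤ toFun (star x * x)
  faithful' : ∀ x ∈ M, toFun (star x * x) = 0 → x = 0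
  normal' : ∃ ξ : ℕ → H, Summable (fun n => ‖ξ n‖ ^ 2) ∧
      ∀ x : BH H, toFun x = ∑' n, (inner ℂ (ξ n) (x (ξ n)) : ℂ)

/-- The GNS (`L²`) norm `‖x‖_φ = φ(x*x)^{1/2}` associated with a state. -/
def φnorm {M : VonNeumannAlgebra H} (φ : NFState M) (x : BH H) : ℝ :=
  Real.sqrt (φ.toFun (star x * x)).re

/-- `p` is an (orthogonal) projection. -/
def IsProjection (p : BH H) : Prop := IsSelfAdjoint p ∧ p * p = p

/-- `u` is a unitary. -/
def IsUnitaryOp (u : BH H) : Prop := star u * u = 1 ∧ u * star u = 1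

/-- The relative commutant `S' ∩ T` of a set `S` inside a set `T`. -/
def relComm (S T : Set (BH H)) : Set (BH H) := {x | x ∈ T ∧ ∀ s ∈ S, s * x = x * s}

/-- A (unital) *-subalgebra, as a subset. -/
def IsStarSubalgebraSet (S : Set (BH H)) : Prop :=
  (1 : BH H) ∈ S ∧ (∀ x ∈ S, ∀ y ∈ S, x + y ∈ S) ∧ (∀ (c : ℂ), ∀ x ∈ S, c • x ∈ S) ∧
    (∀ x ∈ S, ∀ y ∈ S, x * y ∈ S) ∧ (∀ x ∈ S, star x ∈ S)

/-- Abelian subset. -/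
def IsAbelianSet (S : Set (BH H)) : Prop := ∀ x ∈ S, ∀ y ∈ S, x * y = y * x

/-- The centralizer `M_φ = {x ∈ M : φ(xy) = φ(yx) ∀ y ∈ M}` of a normal faithful state,
which coincides with the fixed-point algebra of the modular flow `σ^φ`. -/
def stateCentralizer (M : VonNeumannAlgebra H) (φ : NFState M) : Set (BH H) :=
  {x | x ∈ M ∧ ∀ y ∈ M, φ.toFun (x * y) = φ.toFun (y * x)}

/-- The set of scalar operators `ℂ1`. -/
def Scalars (H : Type) [NormedAddCommGroup H] [InnerProductSpace ℂ H] [CompleteSpace H] :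
    Set (BH H) := {x | ∃ c : ℂ, x = c • (1 : BH H)}

/-- The modular automorphism group `σ^φ` of a normal faithful state `φ` on `M`, characterized
by the KMS condition. -/
structure ModularFlow (M : VonNeumannAlgebra H) (φ : NFState M) where
  σ : ℝ → BH H → BH H
  σ_zero' : σ 0 = id
  σ_add' : ∀ s t x, σ (s + t) x = σ s (σ t x)
  mem' : ∀ t, ∀ x ∈ M, σ t x ∈ M
  linear' : ∀ t, IsLinearMap ℂ (σ t)
  map_mul' : ∀ t x y, σ t (x * y) = σ t x * σ t y
  map_star' : ∀ t x, σ t (star x) = star (σ t x)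
  invariant' : ∀ t x, φ.toFun (σ t x) = φ.toFun x
  continuous' : ∀ x ∈ M, ∀ ξ : H, Continuous fun t => σ t x ξ
  kms' : ∀ x ∈ M, ∀ y ∈ M, ∃ F : ℂ → ℂ,
      ContinuousOn F {z | 0 ≤ z.im ∧ z.im ≤ 1} ∧
      DifferentiableOn ℂ F {z | 0 < z.im ∧ z.im < 1} ∧
      (∀ t : ℝ, F t = φ.toFun (σ t x * y)) ∧
      (∀ t : ℝ, F (t + Complex.I) = φ.toFun (y * σ t x))

/-- `x` is entire analytic for the modular flow. -/
def IsEntireAnalytic {M : VonNeumannAlgebra H} {φ : NFState M} (m : ModularFlow M φ)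
    (v : BH H) : Prop :=
  ∃ G : ℂ → BH H, Differentiable ℂ G ∧ ∀ t : ℝ, G t = m.σ t v

/-- A `φ`-preserving conditional expectation from (the subset) `D` onto `S ⊆ D`. -/
structure CondExpOn (φ : BH H →ₗ[ℂ] ℂ) (D S : Set (BH H)) where
  E : BH H →ₗ[ℂ] BH H
  mem' : ∀ x ∈ D, E x ∈ S
  fix' : ∀ x ∈ S, E x = x
  pos' : ∀ x : BH H, x.IsPositive → (E x).IsPositive
  preserve' : ∀ x ∈ D, φ (E x) = φ x
  bimod' : ∀ a ∈ S, ∀ x ∈ D, ∀ b ∈ S, E (a * x * b) = a * E x * b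

/-- Normality (σ-weak continuity) of a map on `D`: it preserves the class of functionals
implemented by square-summable sequences of vectors. -/
def IsNormalMapFun (D : Set (BH H)) (T : BH H → BH H) : Prop :=
  ∀ ξ : ℕ → H, Summable (fun n => ‖ξ n‖ ^ 2) →
    ∃ η : ℕ → H, Summable (fun n => ‖η n‖ ^ 2) ∧
      ∀ x ∈ D, (∑' n, (inner ℂ (ξ n) (T x (ξ n)) : ℂ)) = ∑' n, (inner ℂ (η n) (x (η n)) : ℂ)

/-- A normal faithful conditional expectation from `M` onto the subset `S`. -/
structure NormalCondExp (M : VonNeumannAlgebra H) (S : Set (BH H)) where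
  E : BH H →ₗ[ℂ] BH H
  mem' : ∀ x ∈ M, E x ∈ S
  fix' : ∀ x ∈ S, E x = x
  pos' : ∀ x : BH H, x.IsPositive → (E x).IsPositive
  bimod' : ∀ a ∈ S, ∀ x ∈ M, ∀ b ∈ S, E (a * x * b) = a * E x * b
  normal' : IsNormalMapFun (M : Set (BH H)) E
  faithful' : ∀ x ∈ M, x.IsPositive → E x = 0 → x = 0

/-- `M` is a factor: its center is trivial. -/
def IsFactor (M : VonNeumannAlgebra H) : Prop :=
  relComm (M : Set (BH H)) (M : Set (BH H)) ⊆ Scalars H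

/-- `M` is a type III₁ factor.  We use the Connes–Størmer characterization: a factor
(other than `ℂ`) is of type III₁ if and only if its normal state space is homogeneous,
i.e. any two normal faithful states are approximately unitarily equivalent in norm. -/
def IsTypeIII₁Factor (M : VonNeumannAlgebra H) : Prop :=
  IsFactor M ∧ (M : Set (BH H)) ≠ Scalars H ∧
    ∀ φ ψ : NFState M, ∀ ε : ℝ, 0 < ε → ∃ u ∈ M, IsUnitaryOp u ∧
      ∀ x ∈ M, ‖x‖ ≤ 1 → ‖ψ.toFun x - φ.toFun (star u * x * u)‖ < ε

/-- The norm `‖xφ - φx‖` of the commutator of `x ∈ M` with the state `φ`, in the predual. -/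
def commNorm (M : VonNeumannAlgebra H) (φ : NFState M) (x : BH H) : ℝ :=
  sSup {r | ∃ y ∈ M, ‖y‖ ≤ 1 ∧ r = ‖φ.toFun (y * x) - φ.toFun (x * y)‖}

/-- Bounded sequences in `M` asymptotically commuting with `φ` in the predual norm. -/
def AC (M : VonNeumannAlgebra H) (φ : NFState M) : Set (ℕ → BH H) :=
  {x | (∀ n, x n ∈ M) ∧ (∃ C : ℝ, ∀ n, ‖x n‖ ≤ C) ∧
    Tendsto (fun n => commNorm M φ (x n)) atTop (nhds 0)}

/-- Connes' bicentralizer `B(M, φ)`. -/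
def Bicentralizer (M : VonNeumannAlgebra H) (φ : NFState M) : Set (BH H) :=
  {a | a ∈ M ∧ ∀ x ∈ AC M φ,
    Tendsto (fun n => φnorm φ (x n * a - a * x n)) atTop (nhds 0)}

/-- Connes' Bicentralizer Property. -/
def HasCBP (M : VonNeumannAlgebra H) : Prop :=
  ∃ φ : NFState M, Bicentralizer M φ = Scalars H

/-- `A` is a maximal abelian *-subalgebra of `M`: `A` is abelian and `A' ∩ M = A`. -/
def IsMasaIn (A : Set (BH H)) (M : VonNeumannAlgebra H) : Prop :=
  A ⊆ (M : Set (BH H)) ∧ IsStarSubalgebraSet A ∧ IsAbelianSet A ∧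
    relComm A (M : Set (BH H)) = A

/-- `A` is singular in `M`: every unitary of `M` normalizing `A` lies in `A`. -/
def IsSingularIn (A : Set (BH H)) (M : VonNeumannAlgebra H) : Prop :=
  ∀ u ∈ M, IsUnitaryOp u → (∀ a ∈ A, u * a * star u ∈ A) →
    (∀ a ∈ A, star u * a * u ∈ A) → u ∈ A

/-- The corner `eMe`. -/
def cornerSet (M : VonNeumannAlgebra H) (e : BH H) : Set (BH H) :=
  {x | x ∈ M ∧ e * x * e = x}


/-- Bounded sequences in `M` converging to `0` *-strongly along `ω` (using the metric
`‖·‖²_φ + ‖·*‖²_φ` for the strong* topology on bounded sets). -/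
def IωSeq (M : VonNeumannAlgebra H) (φ : NFState M) (ω : Filter ℕ) : Set (ℕ → BH H) :=
  {x | (∀ n, x n ∈ M) ∧ (∃ C : ℝ, ∀ n, ‖x n‖ ≤ C) ∧
    Tendsto (fun n => (φ.toFun (star (x n) * x n) + φ.toFun (x n * star (x n))).re)
      ω (nhds 0)}

/-- The `ω`-multiplier sequences of `M`. -/
def MultSeq (M : VonNeumannAlgebra H) (φ : NFState M) (ω : Filter ℕ) : Set (ℕ → BH H) :=
  {x | (∀ n, x n ∈ M) ∧ (∃ C : ℝ, ∀ n, ‖x n‖ ≤ C) ∧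
    ∀ y ∈ IωSeq M φ ω,
      (fun n => x n * y n) ∈ IωSeq M φ ω ∧ (fun n => y n * x n) ∈ IωSeq M φ ω}

/-- The Ocneanu ultraproduct `M^ω = M^ω(M)/I_ω(M)`, axiomatized: a von Neumann algebra `Mω`
on a Hilbert space `K` together with the quotient map `π` from multiplier sequences, with
kernel `I_ω`, and the ultraproduct state `φω = lim_ω φ`. -/
structure OcneanuUltraproduct (M : VonNeumannAlgebra H) (φ : NFState M) (ω : Filter ℕ)
    (K : Type) [NormedAddCommGroup K] [InnerProductSpace ℂ K] [CompleteSpace K] where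
  Mω : VonNeumannAlgebra K
  π : (ℕ → BH H) → BH K
  mem' : ∀ x ∈ MultSeq M φ ω, π x ∈ Mω
  surj' : ∀ y ∈ Mω, ∃ x ∈ MultSeq M φ ω, π x = y
  add' : ∀ x ∈ MultSeq M φ ω, ∀ y ∈ MultSeq M φ ω, π (x + y) = π x + π y
  smul' : ∀ (c : ℂ), ∀ x ∈ MultSeq M φ ω, π (c • x) = c • π x
  mul' : ∀ x ∈ MultSeq M φ ω, ∀ y ∈ MultSeq M φ ω, π (x * y) = π x * π y
  star' : ∀ x ∈ MultSeq M φ ω, π (fun n => star (x n)) = star (π x)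
  one' : π (fun _ => 1) = 1
  ker' : ∀ x ∈ MultSeq M φ ω, (π x = 0 ↔ x ∈ IωSeq M φ ω)
  φω : BH K →ₗ[ℂ] ℂ
  φω_lim' : ∀ x ∈ MultSeq M φ ω, Tendsto (fun n => φ.toFun (x n)) ω (nhds (φω (π x)))
  φω_state' : φω 1 = 1 ∧ (∀ y : BH K, 0 ≤ φω (star y * y)) ∧
    ∀ y ∈ Mω, φω (star y * y) = 0 → y = 0

end HoudayerPopa

open HoudayerPopa
/-- direct sums of corner expectations (Lemma 2.1 of the paper). -/
theorem stmt0
    {H : Type} [NormedAddCommGroup H] [InnerProductSpace ℂ H] [CompleteSpace H]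
    (M : VonNeumannAlgebra H) (φ : NFState M)
    (J : Type) [Fintype J] [Nonempty J]
    (e : J → BH H)
    (hecent : ∀ j, e j ∈ stateCentralizer M φ)
    (heproj : ∀ j, IsProjection (e j)) (hene : ∀ j, e j ≠ 0)
    (horth : ∀ i j, i ≠ j → e i * e j = 0)
    (hsum : ∑ j, e j = 1)
    (A : J → Set (BH H))
    (hAcorner : ∀ j, A j ⊆ cornerSet M (e j))
    (hAunit : ∀ j, e j ∈ A j)
    (hAadd : ∀ j, ∀ x ∈ A j, ∀ y ∈ A j, x + y ∈ A j)
    (hAsmul : ∀ j, ∀ (c : ℂ), ∀ x ∈ A j, c • x ∈ A j)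
    (hAmul : ∀ j, ∀ x ∈ A j, ∀ y ∈ A j, x * y ∈ A j)
    (hAstar : ∀ j, ∀ x ∈ A j, star x ∈ A j)
    (hAab : ∀ j, IsAbelianSet (A j))
    (hAfd : ∀ j, FiniteDimensional ℂ (Submodule.span ℂ (A j)))
    (Asum : Set (BH H))
    (hAsum : Asum = {x | ∃ f : J → BH H, (∀ j, f j ∈ A j) ∧ x = ∑ j, f j}) :
    (Asum ⊆ (M : Set (BH H)) ∧ IsStarSubalgebraSet Asum ∧ IsAbelianSet Asum ∧
      (∀ j, e j ∈ Asum) ∧ FiniteDimensional ℂ (Submodule.span ℂ Asum)) ∧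
    (∀ E1 : CondExpOn φ.toFun (M : Set (BH H)) (relComm Asum (M : Set (BH H))),
     ∀ E2 : CondExpOn φ.toFun (M : Set (BH H)) Asum,
     ∀ F1 : (∀ j, CondExpOn φ.toFun (cornerSet M (e j))
        (relComm (A j) (cornerSet M (e j)))),
     ∀ F2 : (∀ j, CondExpOn φ.toFun (cornerSet M (e j)) (A j)),
     ∀ x ∈ M,
      (φnorm φ (E1.E x - E2.E x)) ^ 2 =
        ∑ j, (φ.toFun (e j)).re *
          ((φnorm φ ((F1 j).E (e j * x * e j) - (F2 j).E (e j * x * e j))) ^ 2 /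
            (φ.toFun (e j)).re)) := by
  classical
  have heM : ∀ j, e j ∈ M := fun j => (hecent j).1
  have hecomm : ∀ j, ∀ y, y ∈ M → φ.toFun (e j * y) = φ.toFun (y * e j) := fun j => (hecent j).2
  have hesa : ∀ j, star (e j) = e j := fun j => (heproj j).1
  have he2 : ∀ j, e j * e j = e j := fun j => (heproj j).2
  have hAM : ∀ j, ∀ x, x ∈ A j → x ∈ M := fun j x hx => (hAcorner j hx).1
  have hAe : ∀ j, ∀ x, x ∈ A j → e j * x * e j = x := fun j x hx => (hAcorner j hx).2
  have h0A : ∀ j, (0 : BH H) ∈ A j := by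
    intro j
    simpa using hAsmul j 0 (e j) (hAunit j)
  have habsL : ∀ j (u : BH H), e j * u * e j = u → e j * u = u := by
    intro j u hu
    conv_lhs => rw [← hu]
    calc e j * (e j * u * e j) = (e j * e j) * u * e j := by noncomm_ring
    _ = e j * u * e j := by rw [he2 j]
    _ = u := hu
  have habsR : ∀ j (u : BH H), e j * u * e j = u → u * e j = u := by
    intro j u hu
    conv_lhs => rw [← hu]
    calc (e j * u * e j) * e j = e j * u * (e j * e j) := by noncomm_ring
    _ = e j * u * e j := by rw [he2 j]
    _ = u := hu
  have hcross : ∀ i j, i ≠ j → ∀ u v : BH H, e i * u * e i = u → e j * v * e j = v →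
      u * v = 0 := by
    intro i j hij u v hu hv
    have h0 : e i * e j = 0 := horth i j hij
    calc u * v = u * (e j * v) := by rw [habsL j v hv]
    _ = (u * e j) * v := by rw [mul_assoc]
    _ = ((u * e i) * e j) * v := by rw [habsR i u hu]
    _ = (u * (e i * e j)) * v := by noncomm_ring
    _ = 0 := by rw [h0, mul_zero, zero_mul]
  have hstarcorner : ∀ j (u : BH H), e j * u * e j = u → e j * star u * e j = star u := by
    intro j u hu
    have h1 : e j * star u * e j = star (e j * u * e j) := by
      simp [star_mul, hesa j, mul_assoc]
    rw [h1, hu]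
  have hdiag : ∀ f g : J → BH H, (∀ j, e j * f j * e j = f j) → (∀ j, e j * g j * e j = g j) →
      (∑ i, f i) * (∑ i, g i) = ∑ i, f i * g i := by
    intro f g hf hg
    rw [Finset.sum_mul_sum]
    refine Finset.sum_congr rfl fun i _ => ?_
    exact Finset.sum_eq_single i
      (fun j _ hj => hcross i j (fun h => hj h.symm) (f i) (g j) (hf i) (hg j))
      (fun h => absurd (Finset.mem_univ i) h)
  have hAsumDecomp : ∀ x ∈ Asum, ∃ f : J → BH H, (∀ j, f j ∈ A j) ∧ x = ∑ j, f j := by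
    intro x hx; rwa [hAsum] at hx
  have hmemAsum : ∀ f : J → BH H, (∀ j, f j ∈ A j) → (∑ j, f j) ∈ Asum := by
    intro f hf; rw [hAsum]; exact ⟨f, hf, rfl⟩
  have hAsumM : Asum ⊆ (M : Set (BH H)) := by
    intro x hx
    obtain ⟨f, hf, rfl⟩ := hAsumDecomp x hx
    exact sum_mem fun j _ => hAM j (f j) (hf j)
  have honeA : (1 : BH H) ∈ Asum := by rw [hAsum]; exact ⟨e, hAunit, hsum.symm⟩
  have hAsumAdd : ∀ x ∈ Asum, ∀ y ∈ Asum, x + y ∈ Asum := by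
    intro x hx y hy
    obtain ⟨f, hf, rfl⟩ := hAsumDecomp x hx
    obtain ⟨g, hg, rfl⟩ := hAsumDecomp y hy
    rw [← Finset.sum_add_distrib]
    exact hmemAsum _ fun j => hAadd j _ (hf j) _ (hg j)
  have hAsumSmul : ∀ (c : ℂ), ∀ x ∈ Asum, c • x ∈ Asum := by
    intro c x hx
    obtain ⟨f, hf, rfl⟩ := hAsumDecomp x hx
    rw [Finset.smul_sum]
    exact hmemAsum _ fun j => hAsmul j c _ (hf j)
  have hAsumMul : ∀ x ∈ Asum, ∀ y ∈ Asum, x * y ∈ Asum := by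
    intro x hx y hy
    obtain ⟨f, hf, rfl⟩ := hAsumDecomp x hx
    obtain ⟨g, hg, rfl⟩ := hAsumDecomp y hy
    rw [hdiag f g (fun j => hAe j _ (hf j)) (fun j => hAe j _ (hg j))]
    exact hmemAsum _ fun j => hAmul j _ (hf j) _ (hg j)
  have hAsumStar : ∀ x ∈ Asum, star x ∈ Asum := by
    intro x hx
    obtain ⟨f, hf, rfl⟩ := hAsumDecomp x hx
    rw [star_sum]
    exact hmemAsum _ fun j => hAstar j _ (hf j)
  have hAsumAb : IsAbelianSet Asum := by
    intro x hx y hy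
    obtain ⟨f, hf, rfl⟩ := hAsumDecomp x hx
    obtain ⟨g, hg, rfl⟩ := hAsumDecomp y hy
    rw [hdiag f g (fun j => hAe j _ (hf j)) (fun j => hAe j _ (hg j)),
        hdiag g f (fun j => hAe j _ (hg j)) (fun j => hAe j _ (hf j))]
    exact Finset.sum_congr rfl fun j _ => hAab j _ (hf j) _ (hg j)
  have heAsum : ∀ j, e j ∈ Asum := by
    intro j
    have h : e j = ∑ i, if i = j then e j else 0 := by simp
    rw [h]
    refine hmemAsum _ fun i => ?_
    rcases eq_or_ne i j with h' | h'
    · subst h'; simpa using hAunit i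
    · simpa [h'] using h0A i
  have hAjAsum : ∀ j, ∀ s ∈ A j, s ∈ Asum := by
    intro j s hs
    have h : s = ∑ i, if i = j then s else 0 := by simp
    rw [h]
    refine hmemAsum _ fun i => ?_
    rcases eq_or_ne i j with h' | h'
    · subst h'; simpa using hs
    · simpa [h'] using h0A i
  have hAsumFD : FiniteDimensional ℂ (Submodule.span ℂ Asum) := by
    have hle : Submodule.span ℂ Asum ≤ ⨆ j, Submodule.span ℂ (A j) := by
      rw [Submodule.span_le]
      intro x hx
      obtain ⟨f, hf, rfl⟩ := hAsumDecomp x hx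
      exact sum_mem fun j _ => Submodule.mem_iSup_of_mem j (Submodule.subset_span (hf j))
    exact Submodule.finiteDimensional_of_le hle
  have hAsub : ∀ j, ∀ x ∈ A j, ∀ y ∈ A j, x - y ∈ A j := by
    intro j x hxx y hyy
    have h := hAsmul j (-1) y hyy
    rw [neg_one_smul] at h
    simpa [sub_eq_add_neg] using hAadd j x hxx _ h
  have hAsumSub : ∀ x ∈ Asum, ∀ y ∈ Asum, x - y ∈ Asum := by
    intro x hxx y hyy
    obtain ⟨f, hf, rfl⟩ := hAsumDecomp x hxx
    obtain ⟨g, hg, rfl⟩ := hAsumDecomp y hyy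
    rw [← Finset.sum_sub_distrib]
    exact hmemAsum _ fun j => hAsub j _ (hf j) _ (hg j)
  refine ⟨⟨hAsumM, ⟨honeA, hAsumAdd, hAsumSmul, hAsumMul, hAsumStar⟩, hAsumAb, heAsum,
    hAsumFD⟩, ?_⟩
  intro E1 E2 F1 F2 x hx
  have hcornerX : ∀ j, e j * x * e j ∈ cornerSet M (e j) := by
    intro j
    refine ⟨mul_mem (mul_mem (heM j) hx) (heM j), ?_⟩
    calc e j * (e j * x * e j) * e j = (e j * e j) * x * (e j * e j) := by noncomm_ring
    _ = e j * x * e j := by rw [he2 j]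
  set b1 : J → BH H := fun j => (F1 j).E (e j * x * e j) with hb1
  set b2 : J → BH H := fun j => (F2 j).E (e j * x * e j) with hb2
  have hb1mem : ∀ j, b1 j ∈ relComm (A j) (cornerSet M (e j)) := fun j =>
    (F1 j).mem' _ (hcornerX j)
  have hb2mem : ∀ j, b2 j ∈ A j := fun j => (F2 j).mem' _ (hcornerX j)
  have hb1c : ∀ j, e j * b1 j * e j = b1 j := fun j => ((hb1mem j).1).2
  have hb1M : ∀ j, b1 j ∈ M := fun j => ((hb1mem j).1).1
  have hb2c : ∀ j, e j * b2 j * e j = b2 j := fun j => hAe j _ (hb2mem j)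
  have hb2M : ∀ j, b2 j ∈ M := fun j => hAM j _ (hb2mem j)
  have heRel : ∀ j, e j ∈ relComm (A j) (cornerSet M (e j)) := by
    intro j
    refine ⟨⟨heM j, by rw [he2 j, he2 j]⟩, ?_⟩
    intro s hs
    rw [habsR j s (hAe j s hs), habsL j s (hAe j s hs)]
  have hpos_re : ∀ v : BH H, 0 ≤ (φ.toFun (star v * v)).re ∧ (φ.toFun (star v * v)).im = 0 := by
    intro v
    have h := φ.pos' v
    rw [Complex.le_def] at h
    exact ⟨by simpa using h.1, by simpa using h.2.symm⟩
  have hφnorm_sq : ∀ v : BH H, (φnorm φ v) ^ 2 = (φ.toFun (star v * v)).re := fun v =>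
    Real.sq_sqrt (hpos_re v).1
  have heφ : ∀ j, (φ.toFun (e j)).re ≠ 0 := by
    intro j hre
    apply hene j
    apply φ.faithful' (e j) (heM j)
    have hse : star (e j) * e j = e j := by rw [hesa j, he2 j]
    rw [hse]
    have him := (hpos_re (e j)).2
    rw [hse] at him
    exact Complex.ext (by simpa using hre) (by simpa using him)
  -- E2 identities
  have hC2a : ∀ c ∈ Asum, φ.toFun (c * E2.E x) = φ.toFun (c * x) := by
    intro c hc
    have hb := E2.bimod' c hc x hx 1 honeA
    rw [mul_one, mul_one] at hb
    rw [← hb]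
    exact E2.preserve' (c * x) (mul_mem (hAsumM hc) hx)
  have hC2b : ∀ c ∈ Asum, φ.toFun (c * ∑ j, b2 j) = φ.toFun (c * x) := by
    intro c hc
    obtain ⟨f, hf, rfl⟩ := hAsumDecomp c hc
    have hfc : ∀ j, e j * f j * e j = f j := fun j => hAe j _ (hf j)
    have hterm : ∀ j, φ.toFun (f j * b2 j) = φ.toFun (f j * x) := by
      intro j
      have hb := (F2 j).bimod' (f j) (hf j) (e j * x * e j) (hcornerX j) (e j) (hAunit j)
      have h1 : f j * (e j * x * e j) * e j = f j * (e j * x * e j) := by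
        rw [mul_assoc, habsR j _ (hcornerX j).2]
      have h2 : f j * b2 j * e j = f j * b2 j := by
        rw [mul_assoc, habsR j _ (hb2c j)]
      rw [h1, h2] at hb
      have harg : f j * (e j * x * e j) ∈ cornerSet M (e j) := by
        refine ⟨mul_mem (hAM j _ (hf j)) (hcornerX j).1, ?_⟩
        calc e j * (f j * (e j * x * e j)) * e j
            = (e j * f j) * ((e j * x * e j) * e j) := by noncomm_ring
          _ = f j * (e j * x * e j) := by rw [habsL j _ (hfc j), habsR j _ (hcornerX j).2]
      rw [← hb, (F2 j).preserve' _ harg]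
      have h3 : f j * (e j * x * e j) = (f j * x) * e j := by
        calc f j * (e j * x * e j) = (f j * e j) * x * e j := by noncomm_ring
        _ = (f j * x) * e j := by rw [habsR j _ (hfc j)]
      rw [h3, ← hecomm j (f j * x) (mul_mem (hAM j _ (hf j)) hx), ← mul_assoc,
        habsL j _ (hfc j)]
    rw [hdiag f b2 hfc hb2c, map_sum, Finset.sum_mul, map_sum]
    exact Finset.sum_congr rfl fun j _ => hterm j
  have hE2 : E2.E x = ∑ j, b2 j := by
    have hdA : E2.E x - ∑ j, b2 j ∈ Asum :=
      hAsumSub _ (E2.mem' x hx) _ (hmemAsum b2 hb2mem)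
    have hsd : star (E2.E x - ∑ j, b2 j) ∈ Asum := hAsumStar _ hdA
    have h0 : φ.toFun (star (E2.E x - ∑ j, b2 j) * (E2.E x - ∑ j, b2 j)) = 0 := by
      rw [mul_sub, map_sub, hC2a _ hsd, hC2b _ hsd, sub_self]
    exact sub_eq_zero.mp (φ.faithful' _ (hAsumM hdA) h0)
  -- E1 identities
  have h1mem : (1 : BH H) ∈ (relComm Asum (M : Set (BH H))) := ⟨OneMemClass.one_mem M, fun s _ => by rw [mul_one, one_mul]⟩
  have hS1star : ∀ c ∈ (relComm Asum (M : Set (BH H))), star c ∈ (relComm Asum (M : Set (BH H))) := by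
    intro c hc
    refine ⟨star_mem hc.1, ?_⟩
    intro s hs
    have h1 := hc.2 (star s) (hAsumStar s hs)
    calc s * star c = star (c * star s) := by rw [star_mul, star_star]
    _ = star (star s * c) := by rw [h1]
    _ = star c * s := by rw [star_mul, star_star]
  have hce : ∀ c ∈ (relComm Asum (M : Set (BH H))), ∀ j, c * e j = e j * c := fun c hc j => (hc.2 (e j) (heAsum j)).symm
  have hcj_mul : ∀ c ∈ (relComm Asum (M : Set (BH H))), ∀ j (u : BH H), e j * u * e j = u →
      c * u = (e j * c * e j) * u := by
    intro c hc j u hu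
    calc c * u = c * (e j * u) := by rw [habsL j u hu]
    _ = (c * e j) * u := by rw [mul_assoc]
    _ = (e j * c) * u := by rw [hce c hc j]
    _ = (e j * c) * (e j * u) := by rw [habsL j u hu]
    _ = (e j * c * e j) * u := by noncomm_ring
  have hcjRel : ∀ c ∈ (relComm Asum (M : Set (BH H))), ∀ j, e j * c * e j ∈ relComm (A j) (cornerSet M (e j)) := by
    intro c hc j
    have hcM : c ∈ M := hc.1
    have hcj : e j * (e j * c * e j) * e j = e j * c * e j := by
      calc e j * (e j * c * e j) * e j = (e j * e j) * c * (e j * e j) := by noncomm_ring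
      _ = e j * c * e j := by rw [he2 j]
    refine ⟨⟨mul_mem (mul_mem (heM j) hcM) (heM j), hcj⟩, ?_⟩
    intro s hs
    have hsA : s ∈ Asum := hAjAsum j s hs
    have hsc : s * c = c * s := hc.2 s hsA
    have hse : e j * s * e j = s := hAe j s hs
    have hA1 : s * (e j * c * e j) = c * s := by
      calc s * (e j * c * e j) = (s * e j) * (c * e j) := by noncomm_ring
      _ = s * (c * e j) := by rw [habsR j s hse]
      _ = (s * c) * e j := by rw [mul_assoc]
      _ = (c * s) * e j := by rw [hsc]
      _ = c * (s * e j) := by rw [mul_assoc]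
      _ = c * s := by rw [habsR j s hse]
    have hA2 : (e j * c * e j) * s = c * s := by
      calc (e j * c * e j) * s = (e j * c) * (e j * s) := by noncomm_ring
      _ = (e j * c) * s := by rw [habsL j s hse]
      _ = e j * (c * s) := by rw [mul_assoc]
      _ = e j * (s * c) := by rw [hsc]
      _ = (e j * s) * c := by rw [mul_assoc]
      _ = s * c := by rw [habsL j s hse]
      _ = c * s := hsc
    exact hA1.trans hA2.symm
  have hsum_cj : ∀ c ∈ (relComm Asum (M : Set (BH H))), ∑ j, e j * c * e j = c := by
    intro c hc
    have h1 : ∀ j, e j * c * e j = c * e j := by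
      intro j
      calc e j * c * e j = (c * e j) * e j := by rw [← hce c hc j]
      _ = c * (e j * e j) := by rw [mul_assoc]
      _ = c * e j := by rw [he2 j]
    calc ∑ j, e j * c * e j = ∑ j, c * e j := Finset.sum_congr rfl fun j _ => h1 j
    _ = c * ∑ j, e j := by rw [Finset.mul_sum]
    _ = c := by rw [hsum, mul_one]
  have hC1a : ∀ c ∈ (relComm Asum (M : Set (BH H))), φ.toFun (c * E1.E x) = φ.toFun (c * x) := by
    intro c hc
    have hb := E1.bimod' c hc x hx 1 h1mem
    rw [mul_one, mul_one] at hb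
    rw [← hb]
    exact E1.preserve' (c * x) (mul_mem hc.1 hx)
  have hC1b : ∀ c ∈ (relComm Asum (M : Set (BH H))), φ.toFun (c * ∑ j, b1 j) = φ.toFun (c * x) := by
    intro c hc
    have hterm : ∀ j, φ.toFun ((e j * c * e j) * b1 j) = φ.toFun ((e j * c * e j) * x) := by
      intro j
      have hrel := hcjRel c hc j
      have hb := (F1 j).bimod' _ hrel (e j * x * e j) (hcornerX j) (e j) (heRel j)
      have h1 : (e j * c * e j) * (e j * x * e j) * e j
          = (e j * c * e j) * (e j * x * e j) := by
        rw [mul_assoc, habsR j _ (hcornerX j).2]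
      have h2 : (e j * c * e j) * b1 j * e j = (e j * c * e j) * b1 j := by
        rw [mul_assoc, habsR j _ (hb1c j)]
      rw [h1, h2] at hb
      have harg : (e j * c * e j) * (e j * x * e j) ∈ cornerSet M (e j) := by
        refine ⟨mul_mem hrel.1.1 (hcornerX j).1, ?_⟩
        calc e j * ((e j * c * e j) * (e j * x * e j)) * e j
            = (e j * (e j * c * e j)) * ((e j * x * e j) * e j) := by noncomm_ring
          _ = (e j * c * e j) * (e j * x * e j) := by
              rw [habsL j _ hrel.1.2, habsR j _ (hcornerX j).2]
      rw [← hb, (F1 j).preserve' _ harg]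
      have h3 : (e j * c * e j) * (e j * x * e j) = ((e j * c * e j) * x) * e j := by
        calc (e j * c * e j) * (e j * x * e j)
            = ((e j * c * e j) * e j) * x * e j := by noncomm_ring
        _ = ((e j * c * e j) * x) * e j := by rw [habsR j _ (hcjRel c hc j).1.2]
      rw [h3, ← hecomm j _ (mul_mem hrel.1.1 hx), ← mul_assoc,
        habsL j _ (hcjRel c hc j).1.2]
    have hsplit : φ.toFun (c * ∑ j, b1 j) = ∑ j, φ.toFun ((e j * c * e j) * b1 j) := by
      rw [Finset.mul_sum, map_sum]
      exact Finset.sum_congr rfl fun j _ => by rw [hcj_mul c hc j (b1 j) (hb1c j)]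
    rw [hsplit]
    have hrhs : ∑ j, φ.toFun ((e j * c * e j) * x) = φ.toFun (c * x) := by
      rw [← map_sum, ← Finset.sum_mul, hsum_cj c hc]
    rw [← hrhs]
    exact Finset.sum_congr rfl fun j _ => hterm j
  have hsumb1S1 : (∑ j, b1 j) ∈ (relComm Asum (M : Set (BH H))) := by
    refine ⟨sum_mem fun j _ => hb1M j, ?_⟩
    intro s hs
    obtain ⟨f, hf, rfl⟩ := hAsumDecomp s hs
    rw [hdiag f b1 (fun j => hAe j _ (hf j)) hb1c, hdiag b1 f hb1c (fun j => hAe j _ (hf j))]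
    exact Finset.sum_congr rfl fun j _ => (hb1mem j).2 (f j) (hf j)
  have hE1 : E1.E x = ∑ j, b1 j := by
    have hdS : E1.E x - ∑ j, b1 j ∈ (relComm Asum (M : Set (BH H))) := by
      have h1 : E1.E x ∈ (relComm Asum (M : Set (BH H))) := E1.mem' x hx
      refine ⟨sub_mem h1.1 hsumb1S1.1, fun s hs => ?_⟩
      rw [mul_sub, sub_mul, h1.2 s hs, hsumb1S1.2 s hs]
    have hsd : star (E1.E x - ∑ j, b1 j) ∈ (relComm Asum (M : Set (BH H))) := hS1star _ hdS
    have h0 : φ.toFun (star (E1.E x - ∑ j, b1 j) * (E1.E x - ∑ j, b1 j)) = 0 := by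
      rw [mul_sub, map_sub, hC1a _ hsd, hC1b _ hsd, sub_self]
    exact sub_eq_zero.mp (φ.faithful' _ hdS.1 h0)
  -- final computation
  have hdjc : ∀ j, e j * (b1 j - b2 j) * e j = b1 j - b2 j := by
    intro j
    rw [mul_sub, sub_mul, hb1c j, hb2c j]
  have hkey : φ.toFun (star (E1.E x - E2.E x) * (E1.E x - E2.E x))
      = ∑ j, φ.toFun (star (b1 j - b2 j) * (b1 j - b2 j)) := by
    rw [hE1, hE2, ← Finset.sum_sub_distrib, star_sum]
    rw [hdiag _ _ (fun j => hstarcorner j _ (hdjc j)) hdjc, map_sum]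
  have hmain : (φnorm φ (E1.E x - E2.E x)) ^ 2 = ∑ j, (φnorm φ (b1 j - b2 j)) ^ 2 := by
    rw [hφnorm_sq, hkey, Complex.re_sum]
    exact Finset.sum_congr rfl fun j _ => (hφnorm_sq _).symm
  refine hmain.trans (Finset.sum_congr rfl fun j _ => ?_)
  show φnorm φ (b1 j - b2 j) ^ 2 =
    (φ.toFun (e j)).re * (φnorm φ (b1 j - b2 j) ^ 2 / (φ.toFun (e j)).re)
  rw [mul_comm ((φ.toFun (e j)).re), div_mul_cancel₀ _ (heφ j)]
end
end

section
/- Let M be a von Neumann algebra with normal faithful state φ, and B ⊆ M a σ^φ-invariant von Neumann subalgebra with φ-preserving conditional expectation E^φ_B. For any selfadjoint contraction a ∈ M with 0 ≤ a ≤ 1, the spectral projection f := 1_{[1/2,1]}(E^φ_B(a)) satisfies ‖f − e‖_φ ≤ 7 ‖e − E^φ_B(a)‖_φ whenever e ∈ M is a projection with a = e (i.e., for any projection e ∈ M, the projection f = 1_{[1/2,1]}(E^φ_B(e)) ∈ B satisfies ‖f − e‖_φ ≤ 7 ‖e − E^φ_B(e)‖_φ). -/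
open scoped ComplexOrder
open Filter

noncomputable section

open HoudayerPopa

private lemma stmt5_phi_nonneg {H : Type} [NormedAddCommGroup H] [InnerProductSpace ℂ H]
    [CompleteSpace H] {M : VonNeumannAlgebra H} (φ : NFState M) {p : BH H} (hp : 0 ≤ p) :
    0 ≤ φ.toFun p := by
  rw [StarOrderedRing.nonneg_iff] at hp
  induction hp using AddSubmonoid.closure_induction with
  | mem x hx => obtain ⟨s, rfl⟩ := hx; exact φ.pos' s
  | zero => simp
  | add x y _ _ hx hy => simpa using add_nonneg hx hy

/-- Popa's Lemma 1.4 in [Po82], property (P1): for a projection `e ∈ M`,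
the spectral projection `f = 1_{[1/2,1]}(E^φ_B(e)) ∈ B` satisfies
`‖f - e‖_φ ≤ 7 ‖e - E^φ_B(e)‖_φ`.  The spectral projection is characterized by:
`f ∈ B` is a projection commuting with `b := E^φ_B(e)`, with `2fb ≥ f` and
`2(1-f)b ≤ 1-f`. -/
theorem stmt5
    {H : Type} [NormedAddCommGroup H] [InnerProductSpace ℂ H] [CompleteSpace H]
    (M : VonNeumannAlgebra H) (φ : NFState M) (m : ModularFlow M φ)
    (S : Set (BH H)) (hS : IsStarSubalgebraSet S) (hSM : S ⊆ (M : Set (BH H)))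
    (hSinv : ∀ t, ∀ x ∈ S, m.σ t x ∈ S)
    (E : CondExpOn φ.toFun (M : Set (BH H)) S)
    (e : BH H) (he : e ∈ M) (heproj : IsProjection e)
    (f : BH H) (hf : f ∈ S) (hfproj : IsProjection f)
    (hcomm : f * E.E e = E.E e * f)
    (hge : ((2 : ℂ) • (f * E.E e) - f).IsPositive)
    (hle : ((1 - f) - (2 : ℂ) • ((1 - f) * E.E e)).IsPositive) :
    φnorm φ (f - e) ≤ 7 * φnorm φ (e - E.E e) := by
  classical
  set b : BH H := E.E e with hb
  have hsf : star f = f := hfproj.1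
  have hse : star e = e := heproj.1
  have hff : f * f = f := hfproj.2
  have hee : e * e = e := heproj.2
  -- positivity of b and 1 - b
  have h0e : (0:BH H) ≤ e := by
    have := star_mul_self_nonneg e
    rwa [hse, hee] at this
  have h1e : (0:BH H) ≤ 1 - e := by
    have h := star_mul_self_nonneg ((1:BH H) - e)
    have h2 : star ((1:BH H) - e) * ((1:BH H) - e) - (1 - e) = e * e - e := by
      rw [star_sub, star_one, hse]; noncomm_ring
    rw [hee, sub_self] at h2
    rwa [sub_eq_zero.mp h2] at h
  have h0b : (0:BH H) ≤ b := by
    rw [ContinuousLinearMap.nonneg_iff_isPositive]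
    exact E.pos' e ((ContinuousLinearMap.nonneg_iff_isPositive e).mp h0e)
  have h1b : (0:BH H) ≤ 1 - b := by
    have hE1 : E.E 1 = 1 := E.fix' 1 hS.1
    have : E.E (1 - e) = 1 - b := by rw [map_sub, hE1, hb]
    rw [ContinuousLinearMap.nonneg_iff_isPositive, ← this]
    exact E.pos' _ ((ContinuousLinearMap.nonneg_iff_isPositive _).mp h1e)
  have hsb : star b = b :=
    ((ContinuousLinearMap.nonneg_iff_isPositive b).mp h0b).isSelfAdjoint
  -- d = (2f-1)(2b-1) ≥ 0
  have hX : (0:BH H) ≤ (2:ℂ) • (f * b) - f :=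
    (ContinuousLinearMap.nonneg_iff_isPositive _).mpr hge
  have hY : (0:BH H) ≤ (1 - f) - (2:ℂ) • ((1 - f) * b) :=
    (ContinuousLinearMap.nonneg_iff_isPositive _).mpr hle
  rw [two_smul] at hX hY
  have hd0 : (0:BH H) ≤ (2*f-1)*(2*b-1) := by
    have h := add_nonneg hX hY
    have heq : ((f*b + f*b) - f) + ((1 - f) - ((1-f)*b + (1-f)*b)) = (2*f-1)*(2*b-1) := by
      noncomm_ring
    rwa [heq] at h
  -- d ≤ 1
  have hc1 : (0:BH H) ≤ f * (1-b) * f := by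
    have := star_left_conjugate_nonneg h1b f
    rwa [hsf] at this
  have hc2 : (0:BH H) ≤ (1-f) * b * (1-f) := by
    have := star_left_conjugate_nonneg h0b ((1:BH H)-f)
    rwa [star_sub, star_one, hsf] at this
  have h1d : (0:BH H) ≤ 1 - (2*f-1)*(2*b-1) := by
    have h := add_nonneg (add_nonneg hc1 hc1) (add_nonneg hc2 hc2)
    have hdiff : ((f*(1-b)*f + f*(1-b)*f) + ((1-f)*b*(1-f) + (1-f)*b*(1-f)))
        - (1 - (2*f-1)*(2*b-1)) = 2*(f*f - f) - 2*(b*f - f*b) := by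
      noncomm_ring
    rw [hff, hcomm, sub_self, sub_self] at hdiff
    simp only [mul_zero, sub_zero, zero_add, add_zero, zero_sub, neg_zero] at hdiff
    rwa [sub_eq_zero.mp hdiff] at h
  have hd1 : (2*f-1)*(2*b-1) ≤ 1 := sub_nonneg.mp h1d
  -- d*d = 4b² - 4b + 1
  have huu : (2*f-1)*(2*f-1) = (1:BH H) := by
    have h : (2*f-1)*(2*f-1) - 1 = 4*(f*f - f) := by noncomm_ring
    rw [hff, sub_self, mul_zero] at h
    exact sub_eq_zero.mp h
  have hcu : (2*b-1)*(2*f-1) = (2*f-1)*(2*b-1) := by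
    have h : (2*b-1)*(2*f-1) - (2*f-1)*(2*b-1) = 4*(b*f - f*b) := by noncomm_ring
    rw [hcomm, sub_self, mul_zero] at h
    exact sub_eq_zero.mp h
  have hdd : ((2*f-1)*(2*b-1))*((2*f-1)*(2*b-1)) = 4*(b*b) - 4*b + 1 := by
    calc ((2*f-1)*(2*b-1))*((2*f-1)*(2*b-1))
        = (2*f-1)*((2*b-1)*(2*f-1))*(2*b-1) := by noncomm_ring
      _ = (2*f-1)*((2*f-1)*(2*b-1))*(2*b-1) := by rw [hcu]
      _ = ((2*f-1)*(2*f-1))*((2*b-1)*(2*b-1)) := by noncomm_ring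
      _ = 1*((2*b-1)*(2*b-1)) := by rw [huu]
      _ = 4*(b*b) - 4*b + 1 := by noncomm_ring
  -- d*d ≤ d
  have hdsq : ((2*f-1)*(2*b-1))*((2*f-1)*(2*b-1)) ≤ (2*f-1)*(2*b-1) := by
    have h := (CStarAlgebra.pow_antitone hd0 hd1) (show (1:ℕ) ≤ 2 by norm_num)
    simpa [pow_one, pow_two] using h
  -- 0 ≤ 1 + 2d - 3d²
  have h3 : (0:BH H) ≤ (2*f-1)*(2*b-1) - ((2*f-1)*(2*b-1))*((2*f-1)*(2*b-1)) :=
    sub_nonneg.mpr hdsq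
  have hP : (0:BH H) ≤ 1 + 2*((2*f-1)*(2*b-1)) - 3*(((2*f-1)*(2*b-1))*((2*f-1)*(2*b-1))) := by
    have h := add_nonneg h1d (add_nonneg (add_nonneg h3 h3) h3)
    have heq : (1 - (2*f-1)*(2*b-1)) +
        (((2*f-1)*(2*b-1) - ((2*f-1)*(2*b-1))*((2*f-1)*(2*b-1)))
          + ((2*f-1)*(2*b-1) - ((2*f-1)*(2*b-1))*((2*f-1)*(2*b-1)))
          + ((2*f-1)*(2*b-1) - ((2*f-1)*(2*b-1))*((2*f-1)*(2*b-1))))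
        = 1 + 2*((2*f-1)*(2*b-1)) - 3*(((2*f-1)*(2*b-1))*((2*f-1)*(2*b-1))) := by
      noncomm_ring
    rwa [heq] at h
  rw [hdd] at hP
  -- key operator inequality: 0 ≤ 8(b - b²) - 4(f-b)²
  have hq : (0:BH H) ≤ 8*(b - b*b) - 4*((f-b)*(f-b)) := by
    have hid : (1 + 2*((2*f-1)*(2*b-1)) - 3*(4*(b*b) - 4*b + 1))
        - (8*(b - b*b) - 4*((f-b)*(f-b))) = 4*(f*f - f) - 4*(b*f - f*b) := by
      noncomm_ring
    rw [hff, hcomm] at hid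
    simp only [sub_self, mul_zero, sub_zero] at hid
    rwa [sub_eq_zero.mp hid] at hP
  -- pass to φ
  have h8 : ((8:ℂ) • (b - b*b) : BH H) = 8*(b - b*b) := by
    rw [Algebra.smul_def, map_ofNat]
  have h4 : ((4:ℂ) • ((f-b)*(f-b)) : BH H) = 4*((f-b)*(f-b)) := by
    rw [Algebra.smul_def, map_ofNat]
  have hφq := stmt5_phi_nonneg φ hq
  rw [← h8, ← h4, map_sub, map_smul, map_smul, smul_eq_mul, smul_eq_mul] at hφq
  have hφ4 : 4 * φ.toFun ((f-b)*(f-b)) ≤ 8 * φ.toFun (b - b*b) := sub_nonneg.mp hφq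
  -- φ(b - b²) = φ((e-b)²)
  have hbS : b ∈ S := E.mem' e he
  have hbM : b ∈ M := hSM hbS
  have heb : φ.toFun (e*b) = φ.toFun (b*b) := by
    have h := E.bimod' 1 hS.1 e he b hbS
    simp only [one_mul] at h
    have hm : e*b ∈ M := mul_mem he hbM
    have hp := E.preserve' (e*b) hm
    rw [h] at hp
    exact hp.symm
  have hbe : φ.toFun (b*e) = φ.toFun (b*b) := by
    have h := E.bimod' b hbS e he 1 hS.1
    simp only [mul_one] at h
    have hm : b*e ∈ M := mul_mem hbM he
    have hp := E.preserve' (b*e) hm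
    rw [h] at hp
    exact hp.symm
  have hpe : φ.toFun b = φ.toFun e := E.preserve' e he
  have hYZ : φ.toFun (b - b*b) = φ.toFun ((e-b)*(e-b)) := by
    have hexp : (e-b)*(e-b) = e*e - e*b - b*e + b*b := by noncomm_ring
    rw [hexp, hee]
    simp only [map_sub, map_add]
    linear_combination hpe + heb + hbe
  -- parallelogram-type bound
  have hz : (0:ℂ) ≤ φ.toFun ((((f-b) - (b-e))) * ((f-b) - (b-e))) := by
    have hsz : star ((f-b) - (b-e)) = (f-b) - (b-e) := by
      simp [star_sub, hsf, hsb, hse]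
    have := φ.pos' ((f-b) - (b-e))
    rwa [hsz] at this
  have hzz : ((f-b) - (b-e)) * ((f-b) - (b-e))
      = 2*((f-b)*(f-b)) + 2*((e-b)*(e-b)) - (f-e)*(f-e) := by noncomm_ring
  have h2a : ((2:ℂ) • ((f-b)*(f-b)) : BH H) = 2*((f-b)*(f-b)) := by
    rw [Algebra.smul_def, map_ofNat]
  have h2b : ((2:ℂ) • ((e-b)*(e-b)) : BH H) = 2*((e-b)*(e-b)) := by
    rw [Algebra.smul_def, map_ofNat]
  rw [hzz, ← h2a, ← h2b, map_sub, map_add, map_smul, map_smul, smul_eq_mul, smul_eq_mul] at hz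
  have hW : φ.toFun ((f-e)*(f-e)) ≤ 2*φ.toFun ((f-b)*(f-b)) + 2*φ.toFun ((e-b)*(e-b)) :=
    sub_nonneg.mp hz
  -- real parts
  set X : ℝ := (φ.toFun ((f-b)*(f-b))).re with hXdef
  set Z : ℝ := (φ.toFun ((e-b)*(e-b))).re with hZdef
  set W : ℝ := (φ.toFun ((f-e)*(f-e))).re with hWdef
  have hZ0 : 0 ≤ Z := by
    have h := φ.pos' (e - b)
    have hs : star (e - b) = e - b := by simp [star_sub, hse, hsb]
    rw [hs] at h
    exact (Complex.le_def.mp h).1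
  have hre1 : 4 * X ≤ 8 * Z := by
    rw [hYZ] at hφ4
    have h := (Complex.le_def.mp hφ4).1
    simpa [Complex.mul_re] using h
  have hre2 : W ≤ 2 * X + 2 * Z := by
    have h := (Complex.le_def.mp hW).1
    simpa [Complex.add_re, Complex.mul_re] using h
  have hW6 : W ≤ 6 * Z := by linarith
  -- conclude
  have hstar1 : star (f - e) = f - e := by simp [star_sub, hsf, hse]
  have hstar2 : star (e - b) = e - b := by simp [star_sub, hse, hsb]
  show Real.sqrt (φ.toFun (star (f-e) * (f-e))).re ≤
    7 * Real.sqrt (φ.toFun (star (e-b) * (e-b))).re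
  rw [hstar1, hstar2]
  calc Real.sqrt (φ.toFun ((f-e)*(f-e))).re ≤ Real.sqrt (49 * Z) := by
        apply Real.sqrt_le_sqrt
        show W ≤ 49 * Z
        linarith
    _ = 7 * Real.sqrt Z := by
        rw [show (49:ℝ) = 7^2 by norm_num, Real.sqrt_mul (by positivity), Real.sqrt_sq (by norm_num)]
    _ = 7 * Real.sqrt (φ.toFun ((e-b)*(e-b))).re := rfl
end
end

section
/- Let M be a σ-finite von Neumann algebra, φ a normal faithful state on M, and N ⊆ M_φ a von Neumann subalgebra with N' ∩ M ⊆ N. For any projection e ∈ N, we have eNe ⊆ (eMe)_{φ_e} and (eNe)' ∩ eMe ⊆ eNe, where φ_e = φ(e·e)/φ(e). -/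
open scoped ComplexOrder
open Filter

noncomputable section

namespace HoudayerPopa

section PopaAux

variable {H : Type} [NormedAddCommGroup H] [InnerProductSpace ℂ H] [CompleteSpace H]

abbrev Idx (N : Set (BH H)) : Type := { b : BH H // b ∈ N } × H

/-- The linear map `Σ cᵢ (bᵢ, ηᵢ) ↦ Σ cᵢ bᵢ(e(y ηᵢ))`. -/
noncomputable def Phi (N : Set (BH H)) (e y : BH H) : (Idx N →₀ ℂ) →ₗ[ℂ] H :=
  Finsupp.linearCombination ℂ (fun p : Idx N => p.1.1 (e (y p.2)))

lemma inner_apply_apply (b c : BH H) (ξ ζ : H) :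
    (inner ℂ (b ξ) (c ζ) : ℂ) = inner ℂ ξ ((star b * c) ζ) := by
  rw [ContinuousLinearMap.mul_apply, ContinuousLinearMap.star_eq_adjoint]
  exact (ContinuousLinearMap.adjoint_inner_right b ξ (c ζ)).symm

lemma Phi_slide {N : Set (BH H)} {e : BH H}
    (hmulN : ∀ a ∈ N, ∀ b ∈ N, a * b ∈ N) (hstarN : ∀ a ∈ N, star a ∈ N)
    (hestar : star e = e) (u v w : BH H)
    (hs : ∀ a ∈ N, star u * (e * (a * (e * v))) = e * (a * (e * w)))
    (f g : Idx N →₀ ℂ) :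
    (inner ℂ (Phi N e u f) (Phi N e v g) : ℂ) = inner ℂ (Phi N e 1 f) (Phi N e w g) := by
  have hterm : ∀ p q : Idx N,
      (inner ℂ (p.1.1 (e (u p.2))) (q.1.1 (e (v q.2))) : ℂ)
        = inner ℂ (p.1.1 (e ((1 : BH H) p.2))) (q.1.1 (e (w q.2))) := by
    rintro ⟨⟨b, hb⟩, η⟩ ⟨⟨c, hc⟩, ζ⟩
    simp only
    have e1 : b (e (u η)) = (b * (e * u)) η := rfl
    have e2 : c (e (v ζ)) = (c * (e * v)) ζ := rfl
    have e3 : b (e ((1 : BH H) η)) = (b * (e * 1)) η := rfl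
    have e4 : c (e (w ζ)) = (c * (e * w)) ζ := rfl
    rw [e1, e2, e3, e4, inner_apply_apply, inner_apply_apply]
    have hop : star (b * (e * u)) * (c * (e * v))
        = star (b * (e * (1 : BH H))) * (c * (e * w)) := by
      have h := hs (star b * c) (hmulN _ (hstarN b hb) c hc)
      simp only [star_mul, hestar, mul_one, star_one, one_mul, mul_assoc] at h ⊢
      exact h
    rw [hop]
  rw [Phi, Phi, Phi, Phi, Finsupp.linearCombination_apply, Finsupp.linearCombination_apply,
    Finsupp.linearCombination_apply, Finsupp.linearCombination_apply,
    Finsupp.sum, Finsupp.sum, Finsupp.sum, Finsupp.sum, sum_inner, sum_inner]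
  refine Finset.sum_congr rfl fun p _ => ?_
  rw [inner_sum, inner_sum]
  refine Finset.sum_congr rfl fun q _ => ?_
  rw [inner_smul_left, inner_smul_left, inner_smul_right, inner_smul_right, hterm p q]

lemma Phi_norm_le {N : Set (BH H)} (e y : BH H) (f : Idx N →₀ ℂ) :
    ‖Phi N e y f‖ ≤ (f.sum fun p c => ‖c‖ * ‖p.1.1‖ * ‖p.2‖) * (‖e‖ * ‖y‖) := by
  rw [Phi, Finsupp.linearCombination_apply, Finsupp.sum, Finsupp.sum, Finset.sum_mul]
  refine (norm_sum_le _ _).trans (Finset.sum_le_sum fun p _ => ?_)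
  rw [norm_smul]
  calc ‖f p‖ * ‖p.1.1 (e (y p.2))‖
      ≤ ‖f p‖ * (‖p.1.1‖ * (‖e‖ * (‖y‖ * ‖p.2‖))) := by
        refine mul_le_mul_of_nonneg_left ?_ (norm_nonneg _)
        refine (p.1.1.le_opNorm _).trans (mul_le_mul_of_nonneg_left ?_ (norm_nonneg _))
        exact (e.le_opNorm _).trans (mul_le_mul_of_nonneg_left (y.le_opNorm _) (norm_nonneg _))
    _ = ‖f p‖ * ‖p.1.1‖ * ‖p.2‖ * (‖e‖ * ‖y‖) := by ring

lemma opnorm_pow_le (t : BH H) (m : ℕ) : ‖t ^ m‖ ≤ ‖t‖ ^ m := by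
  induction m with
  | zero => rw [pow_zero, pow_zero]; exact ContinuousLinearMap.norm_id_le
  | succ n ih =>
    calc ‖t ^ (n + 1)‖ = ‖t ^ n * t‖ := by rw [pow_succ]
    _ ≤ ‖t ^ n‖ * ‖t‖ := norm_mul_le _ _
    _ ≤ ‖t‖ ^ n * ‖t‖ := mul_le_mul_of_nonneg_right ih (norm_nonneg t)
    _ = ‖t‖ ^ (n + 1) := (pow_succ _ _).symm


lemma Phi_bound {N : Set (BH H)} {e x : BH H}
    (hmulN : ∀ a ∈ N, ∀ b ∈ N, a * b ∈ N) (hstarN : ∀ a ∈ N, star a ∈ N)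
    (hestar : star e = e)
    (hslide1 : ∀ a ∈ N, star x * (e * (a * (e * x))) = e * (a * (e * (star x * x))))
    (hslide2 : ∀ k l : ℕ, ∀ a ∈ N, star ((star x * x) ^ k) * (e * (a * (e * (star x * x) ^ l)))
        = e * (a * (e * (star x * x) ^ (k + l))))
    (f : Idx N →₀ ℂ) :
    ‖Phi N e x f‖ ≤ ‖x‖ * ‖Phi N e 1 f‖ := by
  set t : BH H := star x * x with ht
  set aa : ℕ → ℝ := fun m => ‖Phi N e (t ^ m) f‖ with haa
  have haa0 : ∀ m, 0 ≤ aa m := fun m => norm_nonneg _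
  have haam : ∀ m, aa m = ‖Phi N e (t ^ m) f‖ := fun _ => rfl
  have haa0' : aa 0 = ‖Phi N e 1 f‖ := by rw [haam 0, pow_zero]
  set A : ℝ := (f.sum fun p c => ‖c‖ * ‖p.1.1‖ * ‖p.2‖) * ‖e‖ with hA
  have hAnn : 0 ≤ A := by
    refine mul_nonneg (Finset.sum_nonneg fun p _ => ?_) (norm_nonneg e)
    positivity
  have hCm : ∀ m, aa m ≤ A * (‖x‖ * ‖x‖) ^ m := by
    intro m
    refine (Phi_norm_le e (t ^ m) f).trans ?_
    have h2 : ‖t ^ m‖ ≤ (‖x‖ * ‖x‖) ^ m := by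
      refine (opnorm_pow_le t m).trans ?_
      rw [ht, CStarRing.norm_star_mul_self]
    calc (f.sum fun p c => ‖c‖ * ‖p.1.1‖ * ‖p.2‖) * (‖e‖ * ‖t ^ m‖)
        ≤ (f.sum fun p c => ‖c‖ * ‖p.1.1‖ * ‖p.2‖) * (‖e‖ * (‖x‖ * ‖x‖) ^ m) := by
          refine mul_le_mul_of_nonneg_left (mul_le_mul_of_nonneg_left h2 (norm_nonneg e)) ?_
          exact Finset.sum_nonneg fun p _ => by positivity
      _ = A * (‖x‖ * ‖x‖) ^ m := by rw [hA]; ring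
  have hsq : ∀ m, aa m ^ 2 ≤ aa 0 * aa (m + m) := by
    intro m
    have hsl := Phi_slide hmulN hstarN hestar (t ^ m) (t ^ m) (t ^ (m + m))
      (hslide2 m m) f f
    have h1 : ‖(inner ℂ (Phi N e (t ^ m) f) (Phi N e (t ^ m) f) : ℂ)‖ = aa m ^ 2 := by
      rw [inner_self_eq_norm_sq_to_K]; simp [haam m]
    rw [← h1, hsl]
    refine (norm_inner_le_norm _ _).trans_eq ?_
    rw [← haa0', ← haam (m + m)]
  have hmain : ‖Phi N e x f‖ ^ 2 ≤ aa 0 * aa 1 := by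
    have hsl := Phi_slide hmulN hstarN hestar x x (t ^ 1)
      (by simpa [pow_one] using hslide1) f f
    have h1 : ‖(inner ℂ (Phi N e x f) (Phi N e x f) : ℂ)‖ = ‖Phi N e x f‖ ^ 2 := by
      rw [inner_self_eq_norm_sq_to_K]; simp
    rw [← h1, hsl]
    refine (norm_inner_le_norm _ _).trans_eq ?_
    rw [← haa0', ← haam 1]
  by_cases hx0 : ‖x‖ = 0
  · have hx : x = 0 := norm_eq_zero.mp hx0
    have hz : Phi N e x f = 0 := by
      rw [Phi, Finsupp.linearCombination_apply, Finsupp.sum]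
      refine Finset.sum_eq_zero fun p _ => ?_
      rw [hx]; simp
    rw [hz, hx0]; simp
  · have hxpos : 0 < ‖x‖ := lt_of_le_of_ne (norm_nonneg x) (Ne.symm hx0)
    have hC2pos : 0 < ‖x‖ * ‖x‖ := mul_pos hxpos hxpos
    by_cases ha0 : aa 0 = 0
    · have h1 : ‖Phi N e x f‖ ^ 2 ≤ 0 := by
        calc ‖Phi N e x f‖ ^ 2 ≤ aa 0 * aa 1 := hmain
        _ = 0 := by rw [ha0, zero_mul]
      have h2 : ‖Phi N e x f‖ = 0 := by nlinarith [norm_nonneg (Phi N e x f)]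
      rw [h2]; positivity
    · have ha0pos : 0 < aa 0 := (haa0 0).lt_of_ne' ha0
      have hstep : ∀ k : ℕ, (aa 1 ^ k * aa 0 ≤ aa 0 ^ k * aa k) →
          aa 1 ^ (k + k) * aa 0 ≤ aa 0 ^ (k + k) * aa (k + k) := by
        intro k ih
        have hsqr : (aa 1 ^ k * aa 0) ^ 2 ≤ (aa 0 ^ k * aa k) ^ 2 :=
          pow_le_pow_left₀ (by positivity) ih 2
        have h2 := hsq k
        have h3 : (aa 1 ^ (k + k) * aa 0) * aa 0 ≤ (aa 0 ^ (k + k) * aa (k + k)) * aa 0 := by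
          calc (aa 1 ^ (k + k) * aa 0) * aa 0 = (aa 1 ^ k * aa 0) ^ 2 := by rw [pow_add]; ring
            _ ≤ (aa 0 ^ k * aa k) ^ 2 := hsqr
            _ = (aa 0 ^ k) ^ 2 * aa k ^ 2 := by ring
            _ ≤ (aa 0 ^ k) ^ 2 * (aa 0 * aa (k + k)) := mul_le_mul_of_nonneg_left h2 (by positivity)
            _ = (aa 0 ^ (k + k) * aa (k + k)) * aa 0 := by rw [pow_add]; ring
        exact (mul_le_mul_iff_of_pos_right ha0pos).mp h3
      have hind : ∀ n : ℕ, aa 1 ^ 2 ^ n * aa 0 ≤ aa 0 ^ 2 ^ n * aa (2 ^ n) := by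
        intro n
        induction n with
        | zero => simpa using (mul_comm (aa 1) (aa 0)).le
        | succ n ih =>
          have h := hstep (2 ^ n) ih
          rwa [show 2 ^ n + 2 ^ n = 2 ^ (n + 1) by rw [pow_succ, mul_two]] at h
      have hfin : aa 1 ≤ (‖x‖ * ‖x‖) * aa 0 := by
        by_contra hlt
        push_neg at hlt
        set r := aa 1 / ((‖x‖ * ‖x‖) * aa 0) with hr
        have hrpos : 1 < r := (one_lt_div (by positivity)).mpr hlt
        have hbound : ∀ n : ℕ, r ^ 2 ^ n ≤ A / aa 0 := by
          intro n
          have h3 : aa 1 ^ 2 ^ n * aa 0 ≤ aa 0 ^ 2 ^ n * (A * (‖x‖ * ‖x‖) ^ 2 ^ n) :=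
            (hind n).trans (mul_le_mul_of_nonneg_left (hCm (2 ^ n)) (by positivity))
          rw [hr, div_pow, div_le_div_iff₀ (by positivity) ha0pos]
          calc aa 1 ^ 2 ^ n * aa 0 ≤ aa 0 ^ 2 ^ n * (A * (‖x‖ * ‖x‖) ^ 2 ^ n) := h3
            _ = A * ((‖x‖ * ‖x‖) * aa 0) ^ 2 ^ n := by rw [mul_pow]; ring
        obtain ⟨n, hn⟩ := pow_unbounded_of_one_lt (A / aa 0) hrpos
        have h4 : r ^ n ≤ r ^ 2 ^ n := pow_le_pow_right₀ hrpos.le (Nat.lt_two_pow_self).le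
        exact absurd (hbound n) (not_le.mpr (hn.trans_le h4))
      have h5 : ‖Phi N e x f‖ ^ 2 ≤ (‖x‖ * aa 0) ^ 2 := by
        calc ‖Phi N e x f‖ ^ 2 ≤ aa 0 * aa 1 := hmain
          _ ≤ aa 0 * ((‖x‖ * ‖x‖) * aa 0) := mul_le_mul_of_nonneg_left hfin (haa0 0)
          _ = (‖x‖ * aa 0) ^ 2 := by ring
      have h6 : ‖Phi N e x f‖ ≤ ‖x‖ * aa 0 := by
        nlinarith [norm_nonneg (Phi N e x f), mul_nonneg hxpos.le (haa0 0)]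
      rwa [haa0'] at h6

/-- Moving a commuting operator through `Phi`. -/
lemma Phi_comp_right {N : Set (BH H)} (e y z : BH H)
    (hbz : ∀ b ∈ N, b * z = z * b) (hez : e * z = z * e) (hyz : y * z = z * y)
    (f : Idx N →₀ ℂ) :
    Phi N e y (Finsupp.mapDomain (fun p : Idx N => (p.1, z p.2)) f) = z (Phi N e y f) := by
  have happ := Finsupp.apply_linearCombination ℂ (z : H →ₗ[ℂ] H)
    (fun p : Idx N => p.1.1 (e (y p.2))) f
  rw [Phi, Finsupp.linearCombination_mapDomain]
  refine Eq.trans ?_ happ.symm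
  have hfun : ((fun p : Idx N => p.1.1 (e (y p.2))) ∘ fun p : Idx N => (p.1, z p.2))
      = (⇑(z : H →ₗ[ℂ] H) ∘ fun p : Idx N => p.1.1 (e (y p.2))) := by
    funext p
    show p.1.1 (e (y (z p.2))) = z (p.1.1 (e (y p.2)))
    have h1 : e * (z * y) = z * (e * y) := by rw [← mul_assoc, hez, mul_assoc]
    have hop : p.1.1 * (e * (y * z)) = z * (p.1.1 * (e * y)) := by
      calc p.1.1 * (e * (y * z)) = p.1.1 * (e * (z * y)) := by rw [hyz]
        _ = p.1.1 * (z * (e * y)) := by rw [h1]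
        _ = (p.1.1 * z) * (e * y) := by rw [← mul_assoc]
        _ = (z * p.1.1) * (e * y) := by rw [hbz p.1.1 p.1.2]
        _ = z * (p.1.1 * (e * y)) := by rw [mul_assoc]
    exact DFunLike.congr_fun hop p.2
  rw [hfun]

lemma Phi_mul_left {N : Set (BH H)} (e y s : BH H) (hs : ∀ b : { b : BH H // b ∈ N }, s * b.1 ∈ N)
    (f : Idx N →₀ ℂ) :
    Phi N e y (Finsupp.mapDomain (fun p : Idx N => (⟨s * p.1.1, hs p.1⟩, p.2)) f)
      = s (Phi N e y f) := by
  have happ := Finsupp.apply_linearCombination ℂ (s : H →ₗ[ℂ] H)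
    (fun p : Idx N => p.1.1 (e (y p.2))) f
  rw [Phi, Finsupp.linearCombination_mapDomain]
  refine Eq.trans ?_ happ.symm
  have hfun : ((fun p : Idx N => p.1.1 (e (y p.2)))
        ∘ fun p : Idx N => ((⟨s * p.1.1, hs p.1⟩ : { b : BH H // b ∈ N }), p.2))
      = (⇑(s : H →ₗ[ℂ] H) ∘ fun p : Idx N => p.1.1 (e (y p.2))) := by
    funext p
    show (s * p.1.1) (e (y p.2)) = s (p.1.1 (e (y p.2)))
    rfl
  rw [hfun]

lemma popa_key (M : VonNeumannAlgebra H)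
    (N : Set (BH H))
    (h1N : (1 : BH H) ∈ N)
    (hmulN : ∀ a ∈ N, ∀ b ∈ N, a * b ∈ N) (hstarN : ∀ a ∈ N, star a ∈ N)
    (hNM : N ⊆ (M : Set (BH H)))
    (hNcomm : ∀ y : BH H, y ∈ (M : Set (BH H)) → (∀ s ∈ N, s * y = y * s) → y ∈ N)
    (e : BH H) (he : e ∈ N) (hestar : star e = e) (hee : e * e = e)
    (x : BH H) (hxM : x ∈ (M : Set (BH H))) (hxe : e * x * e = x)
    (hxc : ∀ a ∈ N, (e * a * e) * x = x * (e * a * e)) :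
    ∃ a ∈ N, x = e * a * e := by
  classical
  -- basic consequences
  have hex : e * x = x := by
    conv_lhs => rw [← hxe]
    simp only [← mul_assoc, hee]
    exact hxe
  have hxe' : x * e = x := by
    conv_lhs => rw [← hxe]
    simp only [mul_assoc, hee]
    rw [← mul_assoc]
    exact hxe
  have hxcs : ∀ a ∈ N, (e * a * e) * star x = star x * (e * a * e) := by
    intro a ha
    have h := congrArg star (hxc (star a) (hstarN a ha))
    simp only [star_mul, hestar, star_star] at h
    simp only [← mul_assoc] at h ⊢
    exact h.symm
  have hts : ∀ a ∈ N, (e * a * e) * (star x * x) = (star x * x) * (e * a * e) := by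
    intro a ha
    calc (e * a * e) * (star x * x) = ((e * a * e) * star x) * x := by
          rw [← mul_assoc]
      _ = (star x * (e * a * e)) * x := by rw [hxcs a ha]
      _ = star x * ((e * a * e) * x) := by rw [mul_assoc]
      _ = star x * (x * (e * a * e)) := by rw [hxc a ha]
      _ = (star x * x) * (e * a * e) := by conv_lhs => rw [← mul_assoc]
  have hstart : star (star x * x) = star x * x := by
    rw [star_mul, star_star]
  have hslide1 : ∀ a ∈ N, star x * (e * (a * (e * x))) = e * (a * (e * (star x * x))) := by
    intro a ha
    have h1 : star x * (e * (a * (e * x))) = star x * (x * (e * a * e)) := by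
      rw [← hxc a ha]; simp only [mul_assoc]
    rw [h1]
    conv_lhs => rw [← mul_assoc]
    rw [← hts a ha]
    simp only [mul_assoc]
  have hslide2 : ∀ k l : ℕ, ∀ a ∈ N,
      star ((star x * x) ^ k) * (e * (a * (e * (star x * x) ^ l)))
        = e * (a * (e * (star x * x) ^ (k + l))) := by
    intro k l a ha
    have hstp : star ((star x * x) ^ k) = (star x * x) ^ k := by rw [star_pow, hstart]
    have hc0 : Commute (e * a * e) (star x * x) := hts a ha
    have hc : Commute (e * a * e) ((star x * x) ^ k) := hc0.pow_right k
    have h1 : star ((star x * x) ^ k) * (e * (a * (e * (star x * x) ^ l)))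
        = (star x * x) ^ k * ((e * a * e) * (star x * x) ^ l) := by
      rw [hstp]; simp only [mul_assoc]
    rw [h1]
    conv_lhs => rw [← mul_assoc]
    rw [← hc.eq, mul_assoc, ← pow_add]
    simp only [mul_assoc]
  -- the two linear maps
  set π : (Idx N →₀ ℂ) →ₗ[ℂ] H := Phi N e 1 with hπ
  set τ : (Idx N →₀ ℂ) →ₗ[ℂ] H := Phi N e x with hτ
  have hbound : ∀ f, ‖τ f‖ ≤ ‖x‖ * ‖π f‖ := fun f =>
    Phi_bound hmulN hstarN hestar hslide1 hslide2 f
  set W : Submodule ℂ H := LinearMap.range π with hW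
  have hker : LinearMap.ker π ≤ LinearMap.ker τ := by
    intro f hf
    rw [LinearMap.mem_ker] at hf ⊢
    have h := hbound f
    rw [hf, norm_zero, mul_zero] at h
    exact norm_le_zero_iff.mp h
  set g : ↥W →ₗ[ℂ] H := ((LinearMap.ker π).liftQ τ hker).comp
    ((LinearMap.quotKerEquivRange π).symm : ↥W →ₗ[ℂ] _) with hg
  have hgπ : ∀ (f) (h : π f ∈ W), g ⟨π f, h⟩ = τ f := by
    intro f h
    have h1 : (LinearMap.quotKerEquivRange π) (Submodule.Quotient.mk f) = ⟨π f, h⟩ :=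
      Subtype.ext (LinearMap.quotKerEquivRange_apply_mk π f)
    have h2 : (LinearMap.quotKerEquivRange π).symm ⟨π f, h⟩ = Submodule.Quotient.mk f := by
      rw [← h1, LinearEquiv.symm_apply_apply]
    simp [hg, LinearMap.comp_apply, h2, Submodule.liftQ_apply]
  have hgnorm : ∀ w : ↥W, ‖g w‖ ≤ ‖x‖ * ‖w‖ := by
    rintro ⟨wv, hw⟩
    obtain ⟨f, rfl⟩ := LinearMap.mem_range.mp hw
    rw [hgπ f _]
    exact hbound f
  set gc : ↥W →L[ℂ] H := LinearMap.mkContinuous g ‖x‖ hgnorm with hgc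
  have hgcg : ∀ w : ↥W, gc w = g w := fun w => rfl
  set Wc := W.topologicalClosure with hWc
  haveI : CompleteSpace ↥Wc := inferInstance
  set einc : ↥W →L[ℂ] ↥Wc :=
    ContinuousLinearMap.codRestrict W.subtypeL Wc (fun w => W.le_topologicalClosure w.2) with heinc
  have hiso : Isometry einc := Isometry.of_dist_eq (fun a b => rfl)
  have hdense : DenseRange einc := by
    intro y
    rw [closure_subtype]
    have himg : Subtype.val '' (Set.range einc) = (W : Set H) := by
      ext z
      constructor
      · rintro ⟨w, ⟨v, rfl⟩, rfl⟩; exact v.2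
      · intro hz; exact ⟨einc ⟨z, hz⟩, ⟨⟨z, hz⟩, rfl⟩, rfl⟩
    rw [himg]
    have h := y.2; rwa [← W.topologicalClosure_coe]
  set gext : ↥Wc →L[ℂ] H := gc.extend einc with hgext
  have hgext_eq : ∀ w : ↥W, gext (einc w) = gc w := fun w =>
    ContinuousLinearMap.extend_eq gc hdense hiso.isUniformInducing w
  set xt : BH H := gext.comp (Wc.orthogonalProjectionOnto) with hxt
  have hWmem : ∀ f, π f ∈ W := fun f => LinearMap.mem_range_self π f
  have hWcmem : ∀ f, π f ∈ Wc := fun f => W.le_topologicalClosure (hWmem f)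
  have hxtπ : ∀ f, xt (π f) = τ f := by
    intro f
    have h1 : Wc.orthogonalProjectionOnto (π f) = ⟨π f, hWcmem f⟩ :=
      Submodule.orthogonalProjectionOnto_mem_subspace_eq_self (⟨π f, hWcmem f⟩ : ↥Wc)
    have h2 : (⟨π f, hWcmem f⟩ : ↥Wc) = einc ⟨π f, hWmem f⟩ := rfl
    rw [hxt, ContinuousLinearMap.comp_apply, h1, h2, hgext_eq, hgcg, hgπ f _]
  have hxt_perp : ∀ ζ, ζ ∈ Wcᗮ → xt ζ = 0 := by
    intro ζ hζ
    rw [hxt, ContinuousLinearMap.comp_apply,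
      Submodule.orthogonalProjectionOnto_apply_of_mem_orthogonal hζ, map_zero]
  -- the commutation principle
  have hclos : (Wc : Set H) = closure (W : Set H) := W.topologicalClosure_coe
  have key : ∀ y : BH H,
      (∀ f : Idx N →₀ ℂ, ∃ f', π f' = y (π f) ∧ τ f' = y (τ f)) →
      (∀ f : Idx N →₀ ℂ, ∃ f', π f' = star y (π f)) →
      y * xt = xt * y := by
    intro y hy hy'
    have heq : ∀ w ∈ Wc, xt (y w) = y (xt w) := by
      have hcont1 : Continuous fun ζ : H => xt (y ζ) := xt.continuous.comp y.continuous
      have hcont2 : Continuous fun ζ : H => y (xt ζ) := y.continuous.comp xt.continuous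
      have heqW : Set.EqOn (fun ζ : H => xt (y ζ)) (fun ζ : H => y (xt ζ)) (W : Set H) := by
        intro w hw
        obtain ⟨f, rfl⟩ := LinearMap.mem_range.mp hw
        obtain ⟨f', h1, h2⟩ := hy f
        simp only
        rw [← h1, hxtπ f', h2, hxtπ f]
      intro w hw
      have h := Set.EqOn.closure heqW hcont1 hcont2
      have hw' : w ∈ closure (W : Set H) := by rw [← hclos]; exact hw
      exact h hw'
    have hstarWc : ∀ w ∈ Wc, star y w ∈ Wc := by
      intro w hw
      have hmaps : Set.MapsTo (⇑(star y)) (W : Set H) (W : Set H) := by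
        intro v hv
        obtain ⟨f, rfl⟩ := LinearMap.mem_range.mp hv
        obtain ⟨f', h1⟩ := hy' f
        show (star y) (π f) ∈ (W : Set H)
        rw [← h1]; exact hWmem f'
      have himg : (⇑(star y)) '' closure (W : Set H) ⊆ closure (W : Set H) :=
        (image_closure_subset_closure_image (star y).continuous).trans
          (closure_mono hmaps.image_subset)
      have hw' : w ∈ closure (W : Set H) := by rw [← hclos]; exact hw
      have hmem : star y w ∈ closure (W : Set H) := himg ⟨w, hw', rfl⟩
      rw [← SetLike.mem_coe, hclos]; exact hmem
    have hperp : ∀ ζ, ζ ∈ Wcᗮ → y ζ ∈ Wcᗮ := by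
      intro ζ hζ
      rw [Submodule.mem_orthogonal] at hζ ⊢
      intro u hu
      have hadj : ContinuousLinearMap.adjoint (star y) = y := by
        rw [← ContinuousLinearMap.star_eq_adjoint, star_star]
      have h : (inner ℂ u (y ζ) : ℂ) = inner ℂ ((star y) u) ζ := by
        conv_lhs => rw [← hadj]
        exact ContinuousLinearMap.adjoint_inner_right (star y) u ζ
      rw [h]
      exact hζ _ (hstarWc u hu)
    ext ζ
    have hwWc : (↑(Wc.orthogonalProjectionOnto ζ) : H) ∈ Wc := (Wc.orthogonalProjectionOnto ζ).2
    have hζpperp : ζ - ↑(Wc.orthogonalProjectionOnto ζ) ∈ Wcᗮ :=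
      Submodule.sub_starProjection_mem_orthogonal (K := Wc) ζ
    set w : H := ↑(Wc.orthogonalProjectionOnto ζ) with hwdef
    have hζdec : ζ = w + (ζ - w) := by abel
    show y (xt ζ) = xt (y ζ)
    calc y (xt ζ) = y (xt (w + (ζ - w))) := by rw [← hζdec]
      _ = y (xt w + xt (ζ - w)) := by rw [map_add]
      _ = y (xt w) := by rw [hxt_perp _ hζpperp, add_zero]
      _ = xt (y w) := (heq w hwWc).symm
      _ = xt (y w) + xt (y (ζ - w)) := by rw [hxt_perp _ (hperp _ hζpperp), add_zero]
      _ = xt (y w + y (ζ - w)) := by rw [map_add]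
      _ = xt (y ζ) := by rw [← map_add, ← hζdec]
  -- xt belongs to M
  have hxtM : xt ∈ (M : Set (BH H)) := by
    rw [← M.centralizer_centralizer]
    intro z hz
    have hz' : ∀ m ∈ (M : Set (BH H)), m * z = z * m := hz
    have hzs : ∀ m ∈ (M : Set (BH H)), m * star z = star z * m := by
      intro m hm
      have h := congrArg star (hz' (star m) (star_mem hm))
      simpa [star_mul, star_star] using h.symm
    refine key z ?_ ?_
    · intro f
      refine ⟨Finsupp.mapDomain (fun p : Idx N => (p.1, z p.2)) f, ?_, ?_⟩
      · exact Phi_comp_right e 1 z (fun b hb => hz' b (hNM hb)) (hz' e (hNM he)) (by rw [one_mul, mul_one]) f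
      · exact Phi_comp_right e x z (fun b hb => hz' b (hNM hb)) (hz' e (hNM he)) (hz' x hxM) f
    · intro f
      exact ⟨Finsupp.mapDomain (fun p : Idx N => (p.1, star z p.2)) f,
        Phi_comp_right e 1 (star z) (fun b hb => hzs b (hNM hb)) (hzs e (hNM he))
          (by rw [one_mul, mul_one]) f⟩
  -- xt commutes with N
  have hxtN : xt ∈ N := by
    refine hNcomm xt hxtM ?_
    intro s hs
    have hsmul : ∀ b : { b : BH H // b ∈ N }, s * b.1 ∈ N := fun b => hmulN s hs b.1 b.2
    have hsmul' : ∀ b : { b : BH H // b ∈ N }, star s * b.1 ∈ N :=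
      fun b => hmulN (star s) (hstarN s hs) b.1 b.2
    refine key s ?_ ?_
    · intro f
      exact ⟨Finsupp.mapDomain (fun p : Idx N => (⟨s * p.1.1, hsmul p.1⟩, p.2)) f,
        Phi_mul_left e 1 s hsmul f, Phi_mul_left e x s hsmul f⟩
    · intro f
      exact ⟨Finsupp.mapDomain (fun p : Idx N => (⟨star s * p.1.1, hsmul' p.1⟩, p.2)) f,
        Phi_mul_left e 1 (star s) hsmul' f⟩
  -- conclusion
  refine ⟨xt, hxtN, ?_⟩
  ext ζ
  have h1 : π (Finsupp.single ((⟨(1 : BH H), h1N⟩ : { b : BH H // b ∈ N }), ζ) 1) = e ζ := by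
    rw [hπ, Phi, Finsupp.linearCombination_single]
    simp
  have h2 : τ (Finsupp.single ((⟨(1 : BH H), h1N⟩ : { b : BH H // b ∈ N }), ζ) 1) = x ζ := by
    rw [hτ, Phi, Finsupp.linearCombination_single]
    have : e (x ζ) = x ζ := DFunLike.congr_fun hex ζ
    simp [this]
  have h3 := hxtπ (Finsupp.single ((⟨(1 : BH H), h1N⟩ : { b : BH H // b ∈ N }), ζ) 1)
  rw [h1, h2] at h3
  show x ζ = (e * xt * e) ζ
  have h4 : (e * xt * e) ζ = e (xt (e ζ)) := rfl
  rw [h4, h3]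
  exact (DFunLike.congr_fun hex ζ).symm


end PopaAux

end HoudayerPopa

open HoudayerPopa
/-- Popa's Lemma 2.1 in [Po81]: compression by a projection `e ∈ N ⊆ M_φ`
preserves both the inclusion into the centralizer and the relative commutant condition
`N' ∩ M ⊆ N`. -/
theorem stmt7
    {H : Type} [NormedAddCommGroup H] [InnerProductSpace ℂ H] [CompleteSpace H]
    (M : VonNeumannAlgebra H) (φ : NFState M)
    (N : Set (BH H)) (hNsub : IsStarSubalgebraSet N)
    (hNcent : N ⊆ stateCentralizer M φ)
    (hNcomm : relComm N (M : Set (BH H)) ⊆ N)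
    (e : BH H) (he : e ∈ N) (heproj : IsProjection e) :
    (∀ a ∈ N, e * a * e ∈ cornerSet M e ∧
      ∀ y ∈ cornerSet M e, φ.toFun ((e * a * e) * y) = φ.toFun (y * (e * a * e))) ∧
    relComm {x | ∃ a ∈ N, x = e * a * e} (cornerSet M e) ⊆
      {x | ∃ a ∈ N, x = e * a * e} := by
  obtain ⟨h1N, haddN, hsmulN, hmulN, hstarN⟩ := hNsub
  have hNM : N ⊆ (M : Set (BH H)) := fun a ha => (hNcent ha).1
  obtain ⟨hesa, hee⟩ := heproj
  constructor
  · intro a ha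
    have heae : e * a * e ∈ N := hmulN _ (hmulN e he a ha) e he
    have h5 : e * (e * a * e) = e * a * e := by rw [← mul_assoc, ← mul_assoc, hee]
    refine ⟨⟨hNM heae, ?_⟩, ?_⟩
    · rw [h5, mul_assoc, hee]
    · intro y hy
      exact (hNcent heae).2 y hy.1
  · rintro z ⟨⟨hzM, hze⟩, hzc⟩
    exact HoudayerPopa.popa_key M N h1N hmulN hstarN hNM
      (fun y hy hc => hNcomm ⟨hy, hc⟩) e he hesa.star_eq hee z hzM hze
      (fun a ha => hzc _ ⟨a, ha, rfl⟩)
end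
end

section
/- Let M be a type III₁ factor with separable predual and φ, ψ two normal faithful states on M. If the bicentralizer B(M,φ) = ℂ1, then B(M,ψ) = ℂ1. (Independence of CBP from the choice of state, via Connes–Størmer transitivity.) -/
open scoped ComplexOrder
open Filter

noncomputable section

open HoudayerPopa

namespace Stmt10Proof
open HoudayerPopa
open scoped InnerProductSpace

variable {H : Type} [NormedAddCommGroup H] [InnerProductSpace ℂ H] [CompleteSpace H]
variable {M : VonNeumannAlgebra H}

/-! ### Basic facts about normal states -/

lemma inner_summable (ξ : ℕ → H) (hξ : Summable (fun n => ‖ξ n‖ ^ 2)) (x : BH H) :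
    Summable (fun n => (inner ℂ (ξ n) (x (ξ n)) : ℂ)) := by
  apply Summable.of_norm
  apply Summable.of_nonneg_of_le (fun n => norm_nonneg _) (fun n => ?_) (hξ.mul_left ‖x‖)
  calc ‖(inner ℂ (ξ n) (x (ξ n)) : ℂ)‖ ≤ ‖ξ n‖ * ‖x (ξ n)‖ := norm_inner_le_norm _ _
    _ ≤ ‖ξ n‖ * (‖x‖ * ‖ξ n‖) := by
        gcongr
        exact x.le_opNorm _
    _ = ‖x‖ * ‖ξ n‖ ^ 2 := by ring

lemma vec_mass (φ : NFState M) (ξ : ℕ → H) (hξ : Summable (fun n => ‖ξ n‖ ^ 2))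
    (hrep : ∀ x : BH H, φ.toFun x = ∑' n, (inner ℂ (ξ n) (x (ξ n)) : ℂ)) :
    (∑' n, (‖ξ n‖ ^ 2 : ℝ)) = 1 := by
  have h1 := φ.map_one'
  rw [hrep 1] at h1
  have h2 : ∀ n, (inner ℂ (ξ n) ((1 : BH H) (ξ n)) : ℂ) = ((‖ξ n‖ ^ 2 : ℝ) : ℂ) := by
    intro n
    simp [ContinuousLinearMap.one_apply, inner_self_eq_norm_sq_to_K]
  rw [tsum_congr h2] at h1
  have h3 : (∑' n, ((‖ξ n‖ ^ 2 : ℝ) : ℂ)) = ((∑' n, (‖ξ n‖ ^ 2 : ℝ) : ℝ) : ℂ) :=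
    (Complex.ofRealCLM.map_tsum hξ).symm
  rw [h3] at h1
  exact_mod_cast h1

lemma state_abs_le (φ : NFState M) (x : BH H) : ‖φ.toFun x‖ ≤ ‖x‖ := by
  obtain ⟨ξ, hξ, hrep⟩ := φ.normal'
  rw [hrep x]
  calc ‖∑' n, (inner ℂ (ξ n) (x (ξ n)) : ℂ)‖
      ≤ ∑' n, ‖(inner ℂ (ξ n) (x (ξ n)) : ℂ)‖ := by
        exact norm_tsum_le_tsum_norm ((inner_summable ξ hξ x).norm)
    _ ≤ ∑' n, ‖x‖ * ‖ξ n‖ ^ 2 := by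
        apply Summable.tsum_le_tsum _ ((inner_summable ξ hξ x).norm) (hξ.mul_left ‖x‖)
        intro n
        calc ‖(inner ℂ (ξ n) (x (ξ n)) : ℂ)‖ ≤ ‖ξ n‖ * ‖x (ξ n)‖ := norm_inner_le_norm _ _
          _ ≤ ‖ξ n‖ * (‖x‖ * ‖ξ n‖) := by gcongr; exact x.le_opNorm _
          _ = ‖x‖ * ‖ξ n‖ ^ 2 := by ring
    _ = ‖x‖ * ∑' n, ‖ξ n‖ ^ 2 := tsum_mul_left
    _ = ‖x‖ := by rw [vec_mass φ ξ hξ hrep, mul_one]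

/-! ### The quadratic form of a state -/

/-- the quadratic form of a state, as a real number -/
def gns2 (φ : NFState M) (z : BH H) : ℝ := (φ.toFun (star z * z)).re

lemma gns2_nonneg (φ : NFState M) (z : BH H) : 0 ≤ gns2 φ z := by
  have := φ.pos' z
  rw [Complex.le_def] at this
  exact this.1

lemma gns2_im (φ : NFState M) (z : BH H) : (φ.toFun (star z * z)).im = 0 := by
  have := φ.pos' z
  rw [Complex.le_def] at this
  exact this.2.symm

lemma φnorm_eq (φ : NFState M) (z : BH H) : φnorm φ z = Real.sqrt (gns2 φ z) := rfl

lemma φnorm_sq (φ : NFState M) (z : BH H) : (φnorm φ z) ^ 2 = gns2 φ z := by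
  rw [φnorm_eq, Real.sq_sqrt (gns2_nonneg φ z)]

lemma φnorm_nonneg (φ : NFState M) (z : BH H) : 0 ≤ φnorm φ z := Real.sqrt_nonneg _

lemma inner_star_mul_self (z : BH H) (v : H) :
    (inner ℂ v ((star z * z) v) : ℂ) = ((‖z v‖ ^ 2 : ℝ) : ℂ) := by
  rw [ContinuousLinearMap.mul_apply, ContinuousLinearMap.star_eq_adjoint,
    ContinuousLinearMap.adjoint_inner_right]
  simp [inner_self_eq_norm_sq_to_K]

lemma summable_vec (z : BH H) (ξ : ℕ → H) (hξ : Summable (fun n => ‖ξ n‖ ^ 2)) :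
    Summable (fun n => (‖z (ξ n)‖ ^ 2 : ℝ)) := by
  apply Summable.of_nonneg_of_le (fun n => by positivity) (fun n => ?_)
    (hξ.mul_left (‖z‖ ^ 2))
  calc ‖z (ξ n)‖ ^ 2 ≤ (‖z‖ * ‖ξ n‖) ^ 2 := by
        gcongr; exact z.le_opNorm _
    _ = ‖z‖ ^ 2 * ‖ξ n‖ ^ 2 := by ring

lemma gns2_eq_tsum (φ : NFState M) (ξ : ℕ → H)
    (hrep : ∀ x : BH H, φ.toFun x = ∑' n, (inner ℂ (ξ n) (x (ξ n)) : ℂ))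
    (hsum : Summable (fun n => ‖ξ n‖ ^ 2)) (z : BH H) :
    gns2 φ z = ∑' n, ‖z (ξ n)‖ ^ 2 := by
  have hs : Summable (fun n => (‖z (ξ n)‖ ^ 2 : ℝ)) := summable_vec z ξ hsum
  unfold gns2
  rw [hrep (star z * z), tsum_congr (fun n => inner_star_mul_self z (ξ n))]
  have : (∑' n, ((‖z (ξ n)‖ ^ 2 : ℝ) : ℂ)) = ((∑' n, (‖z (ξ n)‖ ^ 2 : ℝ) : ℝ) : ℂ) :=
    (Complex.ofRealCLM.map_tsum hs).symm
  rw [this, Complex.ofReal_re]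

/-! ### Unitaries and transport -/

lemma unitary_norm_le {u : BH H} (hu : IsUnitaryOp u) : ‖u‖ ≤ 1 := by
  apply ContinuousLinearMap.opNorm_le_bound _ zero_le_one
  intro v
  have h : inner ℂ (u v) (u v) = (inner ℂ v v : ℂ) := by
    calc (inner ℂ (u v) (u v) : ℂ) = inner ℂ v ((star u * u) v) := by
          rw [ContinuousLinearMap.mul_apply, ContinuousLinearMap.star_eq_adjoint,
            ContinuousLinearMap.adjoint_inner_right]
      _ = inner ℂ v v := by rw [hu.1]; simp
  have h2 : ‖u v‖ ^ 2 = ‖v‖ ^ 2 := by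
    rw [inner_self_eq_norm_sq_to_K, inner_self_eq_norm_sq_to_K] at h
    exact_mod_cast h
  rw [one_mul]
  nlinarith [norm_nonneg (u v), norm_nonneg v]

lemma star_unitary {u : BH H} (hu : IsUnitaryOp u) : IsUnitaryOp (star u) :=
  ⟨by simpa using hu.2, by simpa using hu.1⟩

lemma gns2_unitary_left (φ : NFState M) {u : BH H} (hu : IsUnitaryOp u) (w : BH H) :
    gns2 φ (u * w) = gns2 φ w := by
  unfold gns2
  congr 2
  rw [star_mul, mul_assoc, ← mul_assoc (star u), hu.1, one_mul]

lemma transport {φ ψ : NFState M} {u : BH H} {ε : ℝ}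
    (hu : ∀ x ∈ M, ‖x‖ ≤ 1 → ‖φ.toFun x - ψ.toFun (star u * x * u)‖ < ε)
    (hε : 0 < ε) {x : BH H} (hx : x ∈ M) :
    ‖φ.toFun x - ψ.toFun (star u * x * u)‖ ≤ ‖x‖ * ε := by
  rcases eq_or_ne x 0 with rfl | hx0
  · simp
  · have hn : (0:ℝ) < ‖x‖ := norm_pos_iff.mpr hx0
    set c : ℂ := ((‖x‖⁻¹ : ℝ) : ℂ) with hc
    have hmem : c • x ∈ M := M.smul_mem hx c
    have hnorm : ‖c • x‖ ≤ 1 := by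
      rw [norm_smul]
      simp only [hc, Complex.norm_real, norm_inv, norm_norm]
      rw [inv_mul_cancel₀ (ne_of_gt hn)]
    have key := hu (c • x) hmem hnorm
    have hdist : φ.toFun (c • x) - ψ.toFun (star u * (c • x) * u) =
        c * (φ.toFun x - ψ.toFun (star u * x * u)) := by
      rw [mul_smul_comm, smul_mul_assoc, map_smul, map_smul, smul_eq_mul, smul_eq_mul]
      ring
    rw [hdist, norm_mul] at key
    have hcabs : ‖c‖ = ‖x‖⁻¹ := by
      simp [hc, abs_of_pos (inv_pos.mpr hn)]
    rw [hcabs] at key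
    calc ‖φ.toFun x - ψ.toFun (star u * x * u)‖
        = ‖x‖ * (‖x‖⁻¹ * ‖φ.toFun x - ψ.toFun (star u * x * u)‖) := by
          field_simp
      _ ≤ ‖x‖ * ε := by
          apply mul_le_mul_of_nonneg_left (le_of_lt key) (le_of_lt hn)

lemma transport_gns2 {φ ψ : NFState M} {u : BH H} {ε : ℝ}
    (hu : ∀ x ∈ M, ‖x‖ ≤ 1 → ‖φ.toFun x - ψ.toFun (star u * x * u)‖ < ε)
    (hε : 0 < ε) {z : BH H} (hz : z ∈ M) :
    |gns2 φ z - gns2 ψ (z * u)| ≤ ‖z‖ ^ 2 * ε := by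
  have hmem : star z * z ∈ M := mul_mem (star_mem hz) hz
  have key := transport hu hε hmem
  have hrw : star u * (star z * z) * u = star (z * u) * (z * u) := by
    rw [star_mul]
    simp only [mul_assoc]
  rw [hrw] at key
  have h1 : |gns2 φ z - gns2 ψ (z * u)| ≤
      ‖φ.toFun (star z * z) - ψ.toFun (star (z * u) * (z * u))‖ := by
    unfold gns2
    rw [← Complex.sub_re]
    exact Complex.abs_re_le_norm _
  calc |gns2 φ z - gns2 ψ (z * u)| ≤ _ := h1
    _ ≤ ‖star z * z‖ * ε := key
    _ ≤ ‖z‖ ^ 2 * ε := by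
        apply mul_le_mul_of_nonneg_right _ (le_of_lt hε)
        calc ‖star z * z‖ ≤ ‖star z‖ * ‖z‖ := ContinuousLinearMap.opNorm_comp_le _ _
          _ = ‖z‖ ^ 2 := by rw [norm_star]; ring

/-! ### commNorm facts -/

lemma commSet_bddAbove (φ : NFState M) (x : BH H) :
    BddAbove {r | ∃ y ∈ M, ‖y‖ ≤ 1 ∧ r = ‖φ.toFun (y * x) - φ.toFun (x * y)‖} := by
  refine ⟨2 * ‖x‖, ?_⟩
  rintro r ⟨y, hy, hny, rfl⟩
  calc ‖φ.toFun (y * x) - φ.toFun (x * y)‖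
      ≤ ‖φ.toFun (y * x)‖ + ‖φ.toFun (x * y)‖ := by
        exact norm_sub_le _ _
    _ ≤ ‖y * x‖ + ‖x * y‖ := add_le_add (state_abs_le φ _) (state_abs_le φ _)
    _ ≤ ‖y‖ * ‖x‖ + ‖x‖ * ‖y‖ :=
        add_le_add (ContinuousLinearMap.opNorm_comp_le _ _) (ContinuousLinearMap.opNorm_comp_le _ _)
    _ ≤ 1 * ‖x‖ + ‖x‖ * 1 := by
        apply add_le_add
        · exact mul_le_mul_of_nonneg_right hny (norm_nonneg _)
        · exact mul_le_mul_of_nonneg_left hny (norm_nonneg _)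
    _ = 2 * ‖x‖ := by ring

lemma le_commNorm (φ : NFState M) (x : BH H) {y : BH H} (hy : y ∈ M) (hny : ‖y‖ ≤ 1) :
    ‖φ.toFun (y * x) - φ.toFun (x * y)‖ ≤ commNorm M φ x :=
  le_csSup (commSet_bddAbove φ x) ⟨y, hy, hny, rfl⟩

lemma commNorm_le (φ : NFState M) (x : BH H) {b : ℝ} (hb : 0 ≤ b)
    (h : ∀ y ∈ M, ‖y‖ ≤ 1 → ‖φ.toFun (y * x) - φ.toFun (x * y)‖ ≤ b) :
    commNorm M φ x ≤ b := by
  apply Real.sSup_le _ hb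
  rintro r ⟨y, hy, hny, rfl⟩
  exact h y hy hny

lemma commNorm_nonneg (φ : NFState M) (x : BH H) : 0 ≤ commNorm M φ x := by
  have h0 : (0:ℝ) ∈
      {r | ∃ y ∈ M, ‖y‖ ≤ 1 ∧ r = ‖φ.toFun (y * x) - φ.toFun (x * y)‖} :=
    ⟨0, zero_mem M.toSubalgebra, by simp, by simp⟩
  exact le_csSup (commSet_bddAbove φ x) h0

/-! ### WOT ultrafilter limits -/

lemma exists_climit (𝔘 : Ultrafilter ℕ) (f : ℕ → ℂ) (R : ℝ) (hf : ∀ n, ‖f n‖ ≤ R) :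
    ∃ c : ℂ, Filter.Tendsto f ↑𝔘 (nhds c) := by
  have hK : IsCompact (Metric.closedBall (0:ℂ) R) := isCompact_closedBall _ _
  have hle : ↑(Ultrafilter.map f 𝔘) ≤ Filter.principal (Metric.closedBall (0:ℂ) R) := by
    rw [Filter.le_principal_iff]
    rw [Ultrafilter.mem_coe, Ultrafilter.mem_map]
    apply Filter.univ_mem'
    intro n
    simp only [Set.mem_preimage, Metric.mem_closedBall, dist_zero_right]
    exact hf n
  obtain ⟨c, _, hc⟩ := hK.ultrafilter_le_nhds (Ultrafilter.map f 𝔘) hle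
  refine ⟨c, ?_⟩
  rw [Filter.Tendsto, ← Ultrafilter.coe_map]
  exact hc

lemma exists_wot_limit (𝔘 : Ultrafilter ℕ) (T : ℕ → (H →L[ℂ] H)) (C : ℝ)
    (hC : ∀ k, ‖T k‖ ≤ C) :
    ∃ Λ : H →L[ℂ] H, ∀ (v η : H),
      Filter.Tendsto (fun k => (inner ℂ v (T k η) : ℂ)) ↑𝔘 (nhds (inner ℂ v (Λ η))) := by
  have hC0 : 0 ≤ C := le_trans (norm_nonneg _) (hC 0)
  have hex : ∀ (η v : H), ∃ c : ℂ,
      Filter.Tendsto (fun k => (inner ℂ (T k η) v : ℂ)) ↑𝔘 (nhds c) := by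
    intro η v
    apply exists_climit 𝔘 _ (C * ‖η‖ * ‖v‖)
    intro n
    calc ‖(inner ℂ (T n η) v : ℂ)‖ ≤ ‖T n η‖ * ‖v‖ := norm_inner_le_norm _ _
      _ ≤ (C * ‖η‖) * ‖v‖ := by
          apply mul_le_mul_of_nonneg_right _ (norm_nonneg _)
          calc ‖T n η‖ ≤ ‖T n‖ * ‖η‖ := (T n).le_opNorm _
            _ ≤ C * ‖η‖ := mul_le_mul_of_nonneg_right (hC n) (norm_nonneg _)
      _ = C * ‖η‖ * ‖v‖ := by ring
  choose c hc using hex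
  have hFlin : ∀ η : H, ∃ F : H →L[ℂ] ℂ, (∀ v, F v = c η v) ∧ ‖F‖ ≤ C * ‖η‖ := by
    intro η
    have hadd : ∀ v w, c η (v + w) = c η v + c η w := by
      intro v w
      refine tendsto_nhds_unique ?_ ((hc η v).add (hc η w))
      have : (fun k => (inner ℂ (T k η) (v + w) : ℂ)) =
          fun k => (inner ℂ (T k η) v : ℂ) + (inner ℂ (T k η) w : ℂ) := by
        funext k; exact inner_add_right _ _ _
      rw [← this]; exact hc η (v + w)
    have hsmul : ∀ (a : ℂ) v, c η (a • v) = a * c η v := by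
      intro a v
      refine tendsto_nhds_unique ?_ ((hc η v).const_mul a)
      have : (fun k => (inner ℂ (T k η) (a • v) : ℂ)) =
          fun k => a * (inner ℂ (T k η) v : ℂ) := by
        funext k; exact inner_smul_right _ _ _
      rw [← this]; exact hc η (a • v)
    have hbd : ∀ v, ‖c η v‖ ≤ C * ‖η‖ * ‖v‖ := by
      intro v
      apply le_of_tendsto (hc η v).norm
      apply Filter.Eventually.of_forall
      intro n
      calc ‖(inner ℂ (T n η) v : ℂ)‖ ≤ ‖T n η‖ * ‖v‖ := norm_inner_le_norm _ _
        _ ≤ (C * ‖η‖) * ‖v‖ := by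
            apply mul_le_mul_of_nonneg_right _ (norm_nonneg _)
            calc ‖T n η‖ ≤ ‖T n‖ * ‖η‖ := (T n).le_opNorm _
              _ ≤ C * ‖η‖ := mul_le_mul_of_nonneg_right (hC n) (norm_nonneg _)
        _ = C * ‖η‖ * ‖v‖ := by ring
    refine ⟨LinearMap.mkContinuous
      { toFun := fun v => c η v,
        map_add' := hadd,
        map_smul' := hsmul } (C * ‖η‖) hbd, fun v => rfl, ?_⟩
    exact LinearMap.mkContinuous_norm_le _ (by positivity) _
  choose F hF hFnorm using hFlin
  set Λ₀ : H → H := fun η => (InnerProductSpace.toDual ℂ H).symm (F η) with hΛ₀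
  have hΛ₀inner : ∀ η v, (inner ℂ (Λ₀ η) v : ℂ) = c η v := by
    intro η v
    rw [hΛ₀]
    rw [InnerProductSpace.toDual_symm_apply]
    exact hF η v
  have hadd : ∀ η η', Λ₀ (η + η') = Λ₀ η + Λ₀ η' := by
    intro η η'
    apply ext_inner_right ℂ
    intro v
    rw [inner_add_left, hΛ₀inner, hΛ₀inner, hΛ₀inner]
    refine tendsto_nhds_unique ?_ ((hc η v).add (hc η' v))
    have : (fun k => (inner ℂ (T k (η + η')) v : ℂ)) =
        fun k => (inner ℂ (T k η) v : ℂ) + (inner ℂ (T k η') v : ℂ) := by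
      funext k; rw [map_add, inner_add_left]
    rw [← this]; exact hc (η + η') v
  have hsmul : ∀ (a : ℂ) η, Λ₀ (a • η) = a • Λ₀ η := by
    intro a η
    apply ext_inner_right ℂ
    intro v
    rw [inner_smul_left, hΛ₀inner, hΛ₀inner]
    refine tendsto_nhds_unique ?_ ((hc η v).const_mul (starRingEnd ℂ a))
    have : (fun k => (inner ℂ (T k (a • η)) v : ℂ)) =
        fun k => (starRingEnd ℂ a) * (inner ℂ (T k η) v : ℂ) := by
      funext k; rw [map_smul, inner_smul_left]
    rw [← this]; exact hc (a • η) v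
  have hbd : ∀ η, ‖Λ₀ η‖ ≤ C * ‖η‖ := by
    intro η
    rw [hΛ₀]
    calc ‖(InnerProductSpace.toDual ℂ H).symm (F η)‖ = ‖F η‖ :=
          LinearIsometryEquiv.norm_map _ _
      _ ≤ C * ‖η‖ := hFnorm η
  set Λ : H →L[ℂ] H := LinearMap.mkContinuous
    { toFun := Λ₀, map_add' := hadd, map_smul' := hsmul } C hbd with hΛ
  refine ⟨Λ, fun v η => ?_⟩
  have h1 : (inner ℂ v (Λ η) : ℂ) = starRingEnd ℂ (c η v) := by
    rw [← inner_conj_symm]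
    congr 1
    exact hΛ₀inner η v
  rw [h1]
  have h2 : (fun k => (inner ℂ v (T k η) : ℂ)) =
      fun k => starRingEnd ℂ (inner ℂ (T k η) v : ℂ) := by
    funext k; rw [← inner_conj_symm]
  rw [h2]
  exact (Complex.continuous_conj.tendsto _).comp (hc η v)

lemma wot_limit_mem (M : VonNeumannAlgebra H) (𝔘 : Ultrafilter ℕ)
    (T : ℕ → (H →L[ℂ] H)) (hT : ∀ k, T k ∈ M) (Λ : H →L[ℂ] H)
    (hconv : ∀ v η : H,
      Filter.Tendsto (fun k => (inner ℂ v (T k η) : ℂ)) ↑𝔘 (nhds (inner ℂ v (Λ η)))) :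
    Λ ∈ M := by
  have hmem : Λ ∈ Set.centralizer (Set.centralizer (M : Set (H →L[ℂ] H))) := by
    rw [Set.mem_centralizer_iff]
    intro s hs
    ext η
    apply ext_inner_left ℂ
    intro v
    have hcomm : ∀ k, T k * s = s * T k := fun k => hs (T k) (hT k)
    have h1 : (inner ℂ v ((s * Λ) η) : ℂ) = inner ℂ ((ContinuousLinearMap.adjoint s) v) (Λ η) := by
      rw [ContinuousLinearMap.mul_apply, ContinuousLinearMap.adjoint_inner_left]
    have h2 : ∀ k, (inner ℂ ((ContinuousLinearMap.adjoint s) v) (T k η) : ℂ) =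
        inner ℂ v (T k (s η)) := by
      intro k
      rw [ContinuousLinearMap.adjoint_inner_left]
      have := congrArg (fun (A : H →L[ℂ] H) => (inner ℂ v (A η) : ℂ)) (hcomm k).symm
      simpa [ContinuousLinearMap.mul_apply] using this
    have h3 : Filter.Tendsto (fun k => (inner ℂ ((ContinuousLinearMap.adjoint s) v) (T k η) : ℂ))
        ↑𝔘 (nhds (inner ℂ v ((Λ * s) η))) := by
      simp only [h2]
      simpa [ContinuousLinearMap.mul_apply] using hconv v (s η)
    have h4 := hconv ((ContinuousLinearMap.adjoint s) v) η
    have h5 : (inner ℂ ((ContinuousLinearMap.adjoint s) v) (Λ η) : ℂ) = inner ℂ v ((Λ * s) η) :=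
      tendsto_nhds_unique h4 h3
    rw [h1, h5]
  rwa [M.centralizer_centralizer] at hmem

/-! ### Lower semicontinuity along WOT limits -/

lemma lsc_vec (𝔘 : Ultrafilter ℕ) (W : ℕ → (H →L[ℂ] H)) (Wlim : H →L[ℂ] H)
    (hconv : ∀ v η : H,
      Filter.Tendsto (fun k => (inner ℂ v (W k η) : ℂ)) ↑𝔘 (nhds (inner ℂ v (Wlim η))))
    (ξ : ℕ → H) (hξ : Summable (fun n => ‖ξ n‖ ^ 2))
    {B : ℝ} (hB : 0 ≤ B)
    (hbd : ∀ᶠ k in ↑𝔘, (∑' n, ‖W k (ξ n)‖ ^ 2) ≤ B) :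
    (∑' n, ‖Wlim (ξ n)‖ ^ 2) ≤ B := by
  have hsumk : ∀ k, Summable (fun n => ‖W k (ξ n)‖ ^ 2) := fun k => summable_vec (W k) ξ hξ
  have hPF : ∀ F : Finset ℕ, (∑ i ∈ F, ‖Wlim (ξ i)‖ ^ 2) ≤ B := by
    intro F
    set P : ℝ := ∑ i ∈ F, ‖Wlim (ξ i)‖ ^ 2 with hP
    have hPnn : 0 ≤ P := Finset.sum_nonneg (fun i _ => by positivity)
    have htend : Filter.Tendsto (fun k => ∑ i ∈ F, (inner ℂ (Wlim (ξ i)) (W k (ξ i)) : ℂ)) ↑𝔘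
        (nhds (∑ i ∈ F, (inner ℂ (Wlim (ξ i)) (Wlim (ξ i)) : ℂ))) :=
      tendsto_finset_sum F (fun i _ => hconv (Wlim (ξ i)) (ξ i))
    have hlimval : (∑ i ∈ F, (inner ℂ (Wlim (ξ i)) (Wlim (ξ i)) : ℂ)) = (P : ℂ) := by
      rw [hP]
      push_cast
      apply Finset.sum_congr rfl
      intro i _
      rw [inner_self_eq_norm_sq_to_K]
      norm_num
    have hev : ∀ᶠ k in (↑𝔘 : Filter ℕ),
        ‖∑ i ∈ F, (inner ℂ (Wlim (ξ i)) (W k (ξ i)) : ℂ)‖ ≤ Real.sqrt P * Real.sqrt B := by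
      filter_upwards [hbd] with k hk
      have h1 : ‖∑ i ∈ F, (inner ℂ (Wlim (ξ i)) (W k (ξ i)) : ℂ)‖ ≤
          ∑ i ∈ F, ‖Wlim (ξ i)‖ * ‖W k (ξ i)‖ := by
        calc ‖∑ i ∈ F, (inner ℂ (Wlim (ξ i)) (W k (ξ i)) : ℂ)‖
            ≤ ∑ i ∈ F, ‖(inner ℂ (Wlim (ξ i)) (W k (ξ i)) : ℂ)‖ := norm_sum_le _ _
          _ ≤ ∑ i ∈ F, ‖Wlim (ξ i)‖ * ‖W k (ξ i)‖ :=
              Finset.sum_le_sum (fun i _ => norm_inner_le_norm _ _)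
      have h2 : (∑ i ∈ F, ‖Wlim (ξ i)‖ * ‖W k (ξ i)‖) ^ 2 ≤
          P * (∑ i ∈ F, ‖W k (ξ i)‖ ^ 2) := by
        rw [hP]
        exact Finset.sum_mul_sq_le_sq_mul_sq F (fun i => ‖Wlim (ξ i)‖) (fun i => ‖W k (ξ i)‖)
      have h3 : (∑ i ∈ F, ‖W k (ξ i)‖ ^ 2) ≤ B := by
        refine le_trans ?_ hk
        exact Summable.sum_le_tsum F (fun i _ => by positivity) (hsumk k)
      have h4 : (∑ i ∈ F, ‖Wlim (ξ i)‖ * ‖W k (ξ i)‖) ^ 2 ≤ P * B := by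
        calc (∑ i ∈ F, ‖Wlim (ξ i)‖ * ‖W k (ξ i)‖) ^ 2
            ≤ P * (∑ i ∈ F, ‖W k (ξ i)‖ ^ 2) := h2
          _ ≤ P * B := by
              apply mul_le_mul_of_nonneg_left h3 hPnn
      have h5 : (∑ i ∈ F, ‖Wlim (ξ i)‖ * ‖W k (ξ i)‖) ≤ Real.sqrt (P * B) := by
        have hnn : 0 ≤ ∑ i ∈ F, ‖Wlim (ξ i)‖ * ‖W k (ξ i)‖ :=
          Finset.sum_nonneg (fun i _ => by positivity)
        nlinarith [Real.sq_sqrt (mul_nonneg hPnn hB), Real.sqrt_nonneg (P * B)]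
      calc ‖∑ i ∈ F, (inner ℂ (Wlim (ξ i)) (W k (ξ i)) : ℂ)‖
          ≤ ∑ i ∈ F, ‖Wlim (ξ i)‖ * ‖W k (ξ i)‖ := h1
        _ ≤ Real.sqrt (P * B) := h5
        _ = Real.sqrt P * Real.sqrt B := Real.sqrt_mul hPnn B
    have hlim : ‖(P : ℂ)‖ ≤ Real.sqrt P * Real.sqrt B := by
      rw [← hlimval]
      exact le_of_tendsto htend.norm hev
    have hPabs : ‖(P : ℂ)‖ = P := by
      rw [Complex.norm_real, Real.norm_of_nonneg hPnn]
    rw [hPabs] at hlim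
    nlinarith [Real.sq_sqrt hPnn, Real.sq_sqrt hB, Real.sqrt_nonneg P, Real.sqrt_nonneg B]
  have hsum : Summable (fun n => ‖Wlim (ξ n)‖ ^ 2) := summable_vec Wlim ξ hξ
  exact Summable.tsum_le_of_sum_le hsum hPF

end Stmt10Proof

namespace Stmt10Proof

set_option maxHeartbeats 2000000 in
/-- The hard inclusion: if `B(M,φ)` is trivial then `B(M,ψ) ⊆ ℂ1`. -/
lemma hard_inclusion
    {H : Type} [NormedAddCommGroup H] [InnerProductSpace ℂ H] [CompleteSpace H]
    {M : VonNeumannAlgebra H}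
    (htrans : ∀ φ ψ : NFState M, ∀ ε : ℝ, 0 < ε → ∃ u ∈ M, IsUnitaryOp u ∧
      ∀ x ∈ M, ‖x‖ ≤ 1 → ‖ψ.toFun x - φ.toFun (star u * x * u)‖ < ε)
    (φ ψ : NFState M) (hφ : Bicentralizer M φ = Scalars H) :
    Bicentralizer M ψ ⊆ Scalars H := by
  rintro a ⟨haM, haB⟩
  -- the vector family implementing φ
  obtain ⟨ξ, hξ, hrep⟩ := φ.normal'
  -- transporter unitaries: `ψ ∘ Ad(u k) ≈ φ` within `1/(k+1)`
  have hch : ∀ k : ℕ, ∃ u, u ∈ M ∧ IsUnitaryOp u ∧ ∀ x ∈ M, ‖x‖ ≤ 1 →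
      ‖φ.toFun x - ψ.toFun (star u * x * u)‖ < 1 / ((k:ℝ) + 1) := by
    intro k
    have hk : (0:ℝ) < 1 / ((k:ℝ) + 1) := by positivity
    obtain ⟨u, hu1, hu2, hu3⟩ := htrans ψ φ (1 / ((k:ℝ)+1)) hk
    exact ⟨u, hu1, hu2, hu3⟩
  choose u humem huuni hutrans using hch
  have hεpos : ∀ k : ℕ, (0:ℝ) < 1 / ((k:ℝ) + 1) := fun k => by positivity
  set A := ‖a‖ with hA
  have hA0 : (0:ℝ) ≤ A := norm_nonneg a
  have hun : ∀ k, ‖u k‖ ≤ 1 := fun k => unitary_norm_le (huuni k)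
  have husn : ∀ k, ‖star (u k)‖ ≤ 1 := fun k => unitary_norm_le (star_unitary (huuni k))
  have huu : ∀ k, star (u k) * u k = 1 := fun k => (huuni k).1
  have huu' : ∀ k, u k * star (u k) = 1 := fun k => (huuni k).2
  have hc1 : ∀ k (w : BH H), star (u k) * (u k * w) = w := fun k w => by
    rw [← mul_assoc, huu k, one_mul]
  have hc2 : ∀ k (w : BH H), u k * (star (u k) * w) = w := fun k w => by
    rw [← mul_assoc, huu' k, one_mul]
  -- the conjugated sequence
  set T : ℕ → BH H := fun k => u k * a * star (u k) with hTdef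
  have hTmem : ∀ k, T k ∈ M :=
    fun k => mul_mem (mul_mem (humem k) haM) (star_mem (humem k))
  have hTnorm : ∀ k, ‖T k‖ ≤ A := by
    intro k
    calc ‖u k * a * star (u k)‖ ≤ ‖u k * a‖ * ‖star (u k)‖ :=
          ContinuousLinearMap.opNorm_comp_le _ _
      _ ≤ (‖u k‖ * ‖a‖) * ‖star (u k)‖ := by
          apply mul_le_mul_of_nonneg_right (ContinuousLinearMap.opNorm_comp_le _ _)
            (norm_nonneg _)
      _ ≤ (1 * A) * 1 := by
          apply mul_le_mul (mul_le_mul_of_nonneg_right (hun k) hA0) (husn k)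
            (norm_nonneg _) (by linarith)
      _ = A := by ring
  -- the almost-central comparison unitaries `g k l = (u l)* (u k)`
  set g : ℕ → ℕ → BH H := fun k l => star (u l) * u k with hgdef
  have hgmem : ∀ k l, g k l ∈ M := fun k l => mul_mem (star_mem (humem l)) (humem k)
  have hgnorm : ∀ k l, ‖g k l‖ ≤ 1 := by
    intro k l
    calc ‖star (u l) * u k‖ ≤ ‖star (u l)‖ * ‖u k‖ := ContinuousLinearMap.opNorm_comp_le _ _
      _ ≤ 1 * 1 := mul_le_mul (husn l) (hun k) (norm_nonneg _) zero_le_one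
      _ = 1 := by ring
  -- the basic approximate invariance relation for g
  have hR : ∀ k l, ∀ z ∈ M, ‖z‖ ≤ 1 →
      ‖ψ.toFun (star (g k l) * z * g k l) - ψ.toFun z‖ ≤
        1 / ((k:ℝ)+1) + 1 / ((l:ℝ)+1) := by
    intro k l z hz hzn
    set x := u l * z * star (u l) with hx
    have hxmem : x ∈ M := mul_mem (mul_mem (humem l) hz) (star_mem (humem l))
    have hxn : ‖x‖ ≤ 1 := by
      calc ‖u l * z * star (u l)‖ ≤ ‖u l * z‖ * ‖star (u l)‖ :=
            ContinuousLinearMap.opNorm_comp_le _ _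
        _ ≤ (‖u l‖ * ‖z‖) * ‖star (u l)‖ := by
            apply mul_le_mul_of_nonneg_right (ContinuousLinearMap.opNorm_comp_le _ _)
              (norm_nonneg _)
        _ ≤ (1 * 1) * 1 := by
            apply mul_le_mul (mul_le_mul (hun l) hzn (norm_nonneg _) zero_le_one) (husn l)
              (norm_nonneg _) (by linarith)
        _ = 1 := by ring
    have h1 := hutrans k x hxmem hxn
    have h2 := hutrans l x hxmem hxn
    have e1 : star (u k) * x * u k = star (g k l) * z * g k l := by
      rw [hx, hgdef]
      simp only [star_mul, star_star, mul_assoc]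
    have e2 : star (u l) * x * u l = z := by
      rw [hx]
      simp only [mul_assoc, hc1, hc2, huu, huu', mul_one]
    rw [e1] at h1
    rw [e2] at h2
    calc ‖ψ.toFun (star (g k l) * z * g k l) - ψ.toFun z‖
        = dist (ψ.toFun (star (g k l) * z * g k l)) (ψ.toFun z) := (Complex.dist_eq _ _).symm
      _ ≤ dist (ψ.toFun (star (g k l) * z * g k l)) (φ.toFun x) +
            dist (φ.toFun x) (ψ.toFun z) := dist_triangle _ _ _
      _ ≤ 1 / ((k:ℝ)+1) + 1 / ((l:ℝ)+1) := by
          apply add_le_add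
          · rw [dist_comm, Complex.dist_eq]
            exact le_of_lt h1
          · rw [Complex.dist_eq]
            exact le_of_lt h2
  -- hence `g k l` almost centralizes ψ
  have hgcomm : ∀ k l, commNorm M ψ (g k l) ≤ 1 / ((k:ℝ)+1) + 1 / ((l:ℝ)+1) := by
    intro k l
    apply commNorm_le ψ _ (by positivity)
    intro t ht htn
    have hgt : g k l * t ∈ M := mul_mem (hgmem k l) ht
    have hgtn : ‖g k l * t‖ ≤ 1 := by
      calc ‖g k l * t‖ ≤ ‖g k l‖ * ‖t‖ := ContinuousLinearMap.opNorm_comp_le _ _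
        _ ≤ 1 * 1 := mul_le_mul (hgnorm k l) htn (norm_nonneg _) zero_le_one
        _ = 1 := by ring
    have hkey := hR k l (g k l * t) hgt hgtn
    have hsg : star (g k l) * g k l = 1 := by
      rw [hgdef]
      simp only [star_mul, star_star, mul_assoc, hc1, hc2, huu, huu', mul_one]
    have e3 : star (g k l) * (g k l * t) * g k l = t * g k l := by
      rw [hgdef]
      simp only [star_mul, star_star, mul_assoc, hc1, hc2, huu, huu', mul_one]
    rw [e3] at hkey
    exact hkey
  -- H1 : uniform smallness of the commutators of a with g k l
  have H1 : ∀ δ : ℝ, 0 < δ → ∃ K : ℕ, ∀ k l, K ≤ k → K ≤ l →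
      φnorm ψ (g k l * a - a * g k l) ≤ δ := by
    intro δ hδ
    by_contra hcon
    push_neg at hcon
    choose kf lf hkf hlf hbig using hcon
    set x : ℕ → BH H := fun m => g (kf m) (lf m) with hxdef
    have hxAC : x ∈ AC M ψ := by
      refine ⟨fun m => hgmem _ _, ⟨1, fun m => hgnorm _ _⟩, ?_⟩
      have hb : ∀ m : ℕ, commNorm M ψ (x m) ≤ 2 * (1 / ((m:ℝ)+1)) := by
        intro m
        have h1 : commNorm M ψ (g (kf m) (lf m)) ≤
            1 / ((kf m:ℝ)+1) + 1 / ((lf m:ℝ)+1) := hgcomm _ _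
        have h2 : 1 / ((kf m:ℝ)+1) ≤ 1 / ((m:ℝ)+1) := by
          apply one_div_le_one_div_of_le (by positivity)
          have := hkf m
          have : ((m:ℝ)) ≤ ((kf m : ℕ) : ℝ) := by exact_mod_cast this
          linarith
        have h3 : 1 / ((lf m:ℝ)+1) ≤ 1 / ((m:ℝ)+1) := by
          apply one_div_le_one_div_of_le (by positivity)
          have := hlf m
          have : ((m:ℝ)) ≤ ((lf m : ℕ) : ℝ) := by exact_mod_cast this
          linarith
        calc commNorm M ψ (x m) ≤ 1 / ((kf m:ℝ)+1) + 1 / ((lf m:ℝ)+1) := h1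
          _ ≤ 1 / ((m:ℝ)+1) + 1 / ((m:ℝ)+1) := add_le_add h2 h3
          _ = 2 * (1 / ((m:ℝ)+1)) := by ring
      have hg : Filter.Tendsto (fun m : ℕ => 2 * (1 / ((m:ℝ)+1))) atTop (nhds 0) := by
        simpa using tendsto_one_div_add_atTop_nhds_zero_nat.const_mul (2:ℝ)
      exact squeeze_zero (fun m => commNorm_nonneg ψ _) hb hg
    have htend := haB x hxAC
    have hev := htend.eventually_lt_const hδ
    obtain ⟨m, hm⟩ := hev.exists
    exact absurd hm (not_lt.mpr (le_of_lt (hbig m)))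
  -- L2 : the conjugated sequence is Cauchy in the φ-norm
  have L2 : ∀ k l, gns2 φ (T k - T l) ≤
      (φnorm ψ (g k l * a - a * g k l)) ^ 2 + (2*A)^2 * (1 / ((k:ℝ)+1)) := by
    intro k l
    have hZmem : T k - T l ∈ M := sub_mem (hTmem k) (hTmem l)
    have htr := transport_gns2 (hutrans k) (hεpos k) hZmem
    have hZu : (T k - T l) * u k = u l * (g k l * a - a * g k l) := by
      rw [sub_mul, mul_sub, hTdef, hgdef]
      congr 1 <;> simp only [mul_assoc, hc1, hc2, huu, huu', mul_one]
    have hZnorm : ‖T k - T l‖ ≤ 2*A := by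
      calc ‖T k - T l‖ ≤ ‖T k‖ + ‖T l‖ := norm_sub_le _ _
        _ ≤ A + A := add_le_add (hTnorm k) (hTnorm l)
        _ = 2*A := by ring
    have h1 : gns2 ψ ((T k - T l) * u k) = gns2 ψ (g k l * a - a * g k l) := by
      rw [hZu, gns2_unitary_left ψ (huuni l)]
    have h2 : |gns2 φ (T k - T l) - gns2 ψ (g k l * a - a * g k l)| ≤
        (2*A)^2 * (1 / ((k:ℝ)+1)) := by
      rw [← h1]
      refine le_trans htr ?_
      apply mul_le_mul_of_nonneg_right _ (le_of_lt (hεpos k))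
      have := hZnorm
      nlinarith [norm_nonneg (T k - T l)]
    have h3 := abs_le.mp h2
    rw [φnorm_sq]
    linarith [h3.2]
  -- L3 : uniform asymptotic commutation of `T k` with φ-almost-central elements
  have L3 : ∀ C : ℝ, 0 < C → ∀ ε : ℝ, 0 < ε → ∃ δ : ℝ, 0 < δ ∧ ∃ K : ℕ, ∀ k, K ≤ k →
      ∀ x, x ∈ M → ‖x‖ ≤ C → commNorm M φ x ≤ δ →
        gns2 φ (x * T k - T k * x) ≤ ε := by
    intro C hC ε₀ hε₀
    by_contra hcon
    push_neg at hcon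
    have hsel : ∀ m : ℕ, ∃ k, m ≤ k ∧ ∃ x, x ∈ M ∧ ‖x‖ ≤ C ∧
        commNorm M φ x ≤ 1 / ((m:ℝ)+1) ∧ ε₀ < gns2 φ (x * T k - T k * x) := by
      intro m
      obtain ⟨k, hk, x, hx1, hx2, hx3, hx4⟩ := hcon (1 / ((m:ℝ)+1)) (by positivity) m
      exact ⟨k, hk, x, hx1, hx2, hx3, hx4⟩
    choose kf hkf xf hxmem hxnorm hxcomm hxbig using hsel
    -- the pulled-back sequence
    set y : ℕ → BH H := fun m => star (u (kf m)) * xf m * u (kf m) with hydef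
    have hymem : ∀ m, y m ∈ M :=
      fun m => mul_mem (mul_mem (star_mem (humem (kf m))) (hxmem m)) (humem (kf m))
    have hynorm : ∀ m, ‖y m‖ ≤ C := by
      intro m
      calc ‖star (u (kf m)) * xf m * u (kf m)‖
          ≤ ‖star (u (kf m)) * xf m‖ * ‖u (kf m)‖ := ContinuousLinearMap.opNorm_comp_le _ _
        _ ≤ (‖star (u (kf m))‖ * ‖xf m‖) * ‖u (kf m)‖ := by
            apply mul_le_mul_of_nonneg_right (ContinuousLinearMap.opNorm_comp_le _ _)
              (norm_nonneg _)
        _ ≤ (1 * C) * 1 := by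
            apply mul_le_mul (mul_le_mul (husn _) (hxnorm m) (norm_nonneg _) zero_le_one)
              (hun _) (norm_nonneg _) (by positivity)
        _ = C := by ring
    have hycomm : ∀ m, commNorm M ψ (y m) ≤
        commNorm M φ (xf m) + 2 * C * (1 / ((kf m:ℝ)+1)) := by
      intro m
      have hCnn : (0:ℝ) ≤ commNorm M φ (xf m) := commNorm_nonneg φ _
      apply commNorm_le ψ _ (by positivity)
      intro t ht htn
      set s := u (kf m) * t * star (u (kf m)) with hs
      have hsmem : s ∈ M := mul_mem (mul_mem (humem _) ht) (star_mem (humem _))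
      have hsn : ‖s‖ ≤ 1 := by
        calc ‖u (kf m) * t * star (u (kf m))‖
            ≤ ‖u (kf m) * t‖ * ‖star (u (kf m))‖ := ContinuousLinearMap.opNorm_comp_le _ _
          _ ≤ (‖u (kf m)‖ * ‖t‖) * ‖star (u (kf m))‖ := by
              apply mul_le_mul_of_nonneg_right (ContinuousLinearMap.opNorm_comp_le _ _)
                (norm_nonneg _)
          _ ≤ (1 * 1) * 1 := by
              apply mul_le_mul (mul_le_mul (hun _) htn (norm_nonneg _) zero_le_one) (husn _)
                (norm_nonneg _) (by positivity)
          _ = 1 := by ring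
      have hid1 : t * y m = star (u (kf m)) * (s * xf m) * u (kf m) := by
        rw [hydef, hs]
        simp only [mul_assoc, hc1, hc2, huu, huu', mul_one]
      have hid2 : y m * t = star (u (kf m)) * (xf m * s) * u (kf m) := by
        rw [hydef, hs]
        simp only [mul_assoc, hc1, hc2, huu, huu', mul_one]
      have hsx : s * xf m ∈ M := mul_mem hsmem (hxmem m)
      have hxs : xf m * s ∈ M := mul_mem (hxmem m) hsmem
      have hsxn : ‖s * xf m‖ ≤ C := by
        calc ‖s * xf m‖ ≤ ‖s‖ * ‖xf m‖ := ContinuousLinearMap.opNorm_comp_le _ _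
          _ ≤ 1 * C := mul_le_mul hsn (hxnorm m) (norm_nonneg _) zero_le_one
          _ = C := by ring
      have hxsn : ‖xf m * s‖ ≤ C := by
        calc ‖xf m * s‖ ≤ ‖xf m‖ * ‖s‖ := ContinuousLinearMap.opNorm_comp_le _ _
          _ ≤ C * 1 := mul_le_mul (hxnorm m) hsn (norm_nonneg _) (by positivity)
          _ = C := by ring
      have htr1 : ‖φ.toFun (s * xf m) - ψ.toFun (t * y m)‖ ≤
          C * (1 / ((kf m:ℝ)+1)) := by
        rw [hid1]
        refine le_trans (transport (hutrans (kf m)) (hεpos _) hsx) ?_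
        apply mul_le_mul_of_nonneg_right hsxn (le_of_lt (hεpos _))
      have htr2 : ‖φ.toFun (xf m * s) - ψ.toFun (y m * t)‖ ≤
          C * (1 / ((kf m:ℝ)+1)) := by
        rw [hid2]
        refine le_trans (transport (hutrans (kf m)) (hεpos _) hxs) ?_
        apply mul_le_mul_of_nonneg_right hxsn (le_of_lt (hεpos _))
      have hmid := le_commNorm φ (xf m) hsmem hsn
      calc ‖ψ.toFun (t * y m) - ψ.toFun (y m * t)‖
          = dist (ψ.toFun (t * y m)) (ψ.toFun (y m * t)) := (Complex.dist_eq _ _).symm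
        _ ≤ dist (ψ.toFun (t * y m)) (φ.toFun (s * xf m)) +
              dist (φ.toFun (s * xf m)) (φ.toFun (xf m * s)) +
              dist (φ.toFun (xf m * s)) (ψ.toFun (y m * t)) := dist_triangle4 _ _ _ _
        _ ≤ C * (1 / ((kf m:ℝ)+1)) + commNorm M φ (xf m) + C * (1 / ((kf m:ℝ)+1)) := by
            apply add_le_add (add_le_add ?_ ?_) ?_
            · rw [dist_comm, Complex.dist_eq]
              exact htr1
            · rw [Complex.dist_eq]
              exact hmid
            · rw [Complex.dist_eq]
              exact htr2
        _ = commNorm M φ (xf m) + 2 * C * (1 / ((kf m:ℝ)+1)) := by ring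
    have hyAC : y ∈ AC M ψ := by
      refine ⟨hymem, ⟨C, hynorm⟩, ?_⟩
      have hb : ∀ m : ℕ, commNorm M ψ (y m) ≤ (1 + 2*C) * (1 / ((m:ℝ)+1)) := by
        intro m
        have h2 : 1 / ((kf m:ℝ)+1) ≤ 1 / ((m:ℝ)+1) := by
          apply one_div_le_one_div_of_le (by positivity)
          have := hkf m
          have : ((m:ℝ)) ≤ ((kf m : ℕ) : ℝ) := by exact_mod_cast this
          linarith
        calc commNorm M ψ (y m)
            ≤ commNorm M φ (xf m) + 2 * C * (1 / ((kf m:ℝ)+1)) := hycomm m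
          _ ≤ 1 / ((m:ℝ)+1) + 2 * C * (1 / ((m:ℝ)+1)) := by
              apply add_le_add (hxcomm m)
              apply mul_le_mul_of_nonneg_left h2 (by positivity)
          _ = (1 + 2*C) * (1 / ((m:ℝ)+1)) := by ring
      have hg : Filter.Tendsto (fun m : ℕ => (1 + 2*C) * (1 / ((m:ℝ)+1))) atTop (nhds 0) := by
        simpa using tendsto_one_div_add_atTop_nhds_zero_nat.const_mul (1 + 2*C)
      exact squeeze_zero (fun m => commNorm_nonneg ψ _) hb hg
    have htendy := haB y hyAC
    -- transport back to φ
    have hWbound : ∀ m, gns2 φ (xf m * T (kf m) - T (kf m) * xf m) ≤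
        (φnorm ψ (y m * a - a * y m))^2 + (2*C*A)^2 * (1 / ((kf m:ℝ)+1)) := by
      intro m
      set W := xf m * T (kf m) - T (kf m) * xf m with hW
      have hWmem : W ∈ M := sub_mem (mul_mem (hxmem m) (hTmem _)) (mul_mem (hTmem _) (hxmem m))
      have hWu : W * u (kf m) = u (kf m) * (y m * a - a * y m) := by
        rw [hW, hydef, hTdef, sub_mul, mul_sub]
        congr 1 <;> simp only [mul_assoc, hc1, hc2, huu, huu', mul_one]
      have hWnorm : ‖W‖ ≤ 2*C*A := by
        have h1 : ‖xf m * T (kf m)‖ ≤ C * A := by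
          calc ‖xf m * T (kf m)‖ ≤ ‖xf m‖ * ‖T (kf m)‖ := ContinuousLinearMap.opNorm_comp_le _ _
            _ ≤ C * A := mul_le_mul (hxnorm m) (hTnorm _) (norm_nonneg _) (le_of_lt hC)
        have h2 : ‖T (kf m) * xf m‖ ≤ A * C := by
          calc ‖T (kf m) * xf m‖ ≤ ‖T (kf m)‖ * ‖xf m‖ := ContinuousLinearMap.opNorm_comp_le _ _
            _ ≤ A * C := mul_le_mul (hTnorm _) (hxnorm m) (norm_nonneg _) hA0
        calc ‖W‖ ≤ ‖xf m * T (kf m)‖ + ‖T (kf m) * xf m‖ := norm_sub_le _ _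
          _ ≤ C * A + A * C := add_le_add h1 h2
          _ = 2*C*A := by ring
      have htr := transport_gns2 (hutrans (kf m)) (hεpos _) hWmem
      have h1 : gns2 ψ (W * u (kf m)) = gns2 ψ (y m * a - a * y m) := by
        rw [hWu, gns2_unitary_left ψ (huuni _)]
      have h2 : |gns2 φ W - gns2 ψ (y m * a - a * y m)| ≤ (2*C*A)^2 * (1 / ((kf m:ℝ)+1)) := by
        rw [← h1]
        refine le_trans htr ?_
        apply mul_le_mul_of_nonneg_right _ (le_of_lt (hεpos _))
        nlinarith [norm_nonneg W, hWnorm]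
      have h3 := abs_le.mp h2
      rw [φnorm_sq]
      linarith [h3.2]
    -- contradiction
    have hrhs : Filter.Tendsto (fun m => (φnorm ψ (y m * a - a * y m))^2 +
        (2*C*A)^2 * (1 / ((kf m:ℝ)+1))) atTop (nhds 0) := by
      have t1 : Filter.Tendsto (fun m => (φnorm ψ (y m * a - a * y m))^2) atTop (nhds 0) := by
        have := htendy.pow 2
        simpa using this
      have t2 : Filter.Tendsto (fun m => (2*C*A)^2 * (1 / ((kf m:ℝ)+1))) atTop (nhds 0) := by
        have hb : ∀ m : ℕ, (2*C*A)^2 * (1 / ((kf m:ℝ)+1)) ≤ (2*C*A)^2 * (1 / ((m:ℝ)+1)) := by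
          intro m
          apply mul_le_mul_of_nonneg_left _ (by positivity)
          apply one_div_le_one_div_of_le (by positivity)
          have := hkf m
          have : ((m:ℝ)) ≤ ((kf m : ℕ) : ℝ) := by exact_mod_cast this
          linarith
        have hg : Filter.Tendsto (fun m : ℕ => (2*C*A)^2 * (1 / ((m:ℝ)+1))) atTop (nhds 0) := by
          have h0 : Filter.Tendsto (fun m : ℕ => 1 / ((m:ℝ)+1)) atTop (nhds 0) :=
            tendsto_one_div_add_atTop_nhds_zero_nat
          simpa using h0.const_mul ((2*C*A)^2)
        exact squeeze_zero (fun m => by positivity) hb hg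
      simpa using t1.add t2
    have hev := hrhs.eventually_lt_const hε₀
    obtain ⟨m, hm⟩ := hev.exists
    have := lt_of_lt_of_le (hxbig m) (hWbound m)
    linarith
  -- the ultrafilter and the WOT limit of T
  obtain ⟨UF, hUle⟩ : ∃ UF : Ultrafilter ℕ, (↑UF : Filter ℕ) ≤ atTop :=
    ⟨Ultrafilter.of atTop, Ultrafilter.of_le _⟩
  obtain ⟨Λ, hΛ⟩ := exists_wot_limit UF T A hTnorm
  have hΛM : Λ ∈ M := wot_limit_mem M UF T hTmem Λ hΛ
  -- Λ belongs to the φ-bicentralizer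
  have hΛB : Λ ∈ Bicentralizer M φ := by
    refine ⟨hΛM, ?_⟩
    intro x hx
    obtain ⟨hxm, ⟨C₀, hC₀⟩, hxc⟩ := hx
    set C := max C₀ 1 with hCdef
    have hC : (0:ℝ) < C := lt_of_lt_of_le zero_lt_one (le_max_right _ _)
    have hCx : ∀ n, ‖x n‖ ≤ C := fun n => le_trans (hC₀ n) (le_max_left _ _)
    rw [Metric.tendsto_atTop]
    intro ε' hε'
    obtain ⟨δ, hδ, K, hKp⟩ := L3 C hC ((ε'/2)^2) (by positivity)
    obtain ⟨N, hN⟩ := Metric.tendsto_atTop.mp hxc δ hδ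
    refine ⟨N, fun n hn => ?_⟩
    have hcomm_n : commNorm M φ (x n) ≤ δ := by
      have := hN n hn
      rw [Real.dist_eq, sub_zero, abs_of_nonneg (commNorm_nonneg φ _)] at this
      exact le_of_lt this
    have hWk : ∀ k, K ≤ k → gns2 φ (x n * T k - T k * x n) ≤ (ε'/2)^2 :=
      fun k hk => hKp k hk (x n) (hxm n) (hCx n) hcomm_n
    -- WOT convergence of the commutators
    have hconvW : ∀ v η : H, Filter.Tendsto
        (fun k => (inner ℂ v ((x n * T k - T k * x n) η) : ℂ)) ↑UF
        (nhds (inner ℂ v ((x n * Λ - Λ * x n) η))) := by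
      intro v η
      have e1 : ∀ S : BH H, (inner ℂ v ((x n * S - S * x n) η) : ℂ) =
          inner ℂ ((ContinuousLinearMap.adjoint (x n)) v) (S η) - inner ℂ v (S ((x n) η)) := by
        intro S
        rw [ContinuousLinearMap.sub_apply, inner_sub_right, ContinuousLinearMap.mul_apply,
          ContinuousLinearMap.mul_apply, ContinuousLinearMap.adjoint_inner_left]
      simp only [e1]
      exact (hΛ _ η).sub (hΛ v _)
    have hbdUF : ∀ᶠ k in (↑UF : Filter ℕ),
        (∑' i, ‖(x n * T k - T k * x n) (ξ i)‖^2) ≤ (ε'/2)^2 := by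
      apply Filter.Eventually.filter_mono hUle
      filter_upwards [eventually_ge_atTop K] with k hk
      rw [← gns2_eq_tsum φ ξ hrep hξ]
      exact hWk k hk
    have hlsc := lsc_vec UF _ _ hconvW ξ hξ (by positivity) hbdUF
    have hsq : gns2 φ (x n * Λ - Λ * x n) ≤ (ε'/2)^2 := by
      rw [gns2_eq_tsum φ ξ hrep hξ]
      exact hlsc
    rw [Real.dist_eq, sub_zero, abs_of_nonneg (φnorm_nonneg φ _)]
    calc φnorm φ (x n * Λ - Λ * x n) = Real.sqrt (gns2 φ (x n * Λ - Λ * x n)) := φnorm_eq _ _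
      _ ≤ Real.sqrt ((ε'/2)^2) := Real.sqrt_le_sqrt hsq
      _ = ε'/2 := Real.sqrt_sq (by positivity)
      _ < ε' := by linarith
  -- hence Λ is a scalar
  rw [hφ] at hΛB
  obtain ⟨c, hc⟩ := hΛB
  -- conclude : a - c•1 is ψ-null
  have key : ∀ θ : ℝ, 0 < θ → gns2 ψ (a - c • 1) ≤ θ := by
    intro θ hθ
    obtain ⟨K₁, hK₁⟩ := H1 (Real.sqrt (θ/2)) (Real.sqrt_pos.mpr (by positivity))
    -- choose a large k
    set D := (2*A)^2 + (A + ‖c‖)^2 with hD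
    have hDnn : (0:ℝ) ≤ D := by positivity
    have hDk : Filter.Tendsto (fun k : ℕ => D * (1 / ((k:ℝ)+1))) atTop (nhds 0) := by
      simpa using tendsto_one_div_add_atTop_nhds_zero_nat.const_mul D
    have hev := (hDk.eventually_lt_const (show (0:ℝ) < θ/2 by linarith)).and
      (eventually_ge_atTop K₁)
    obtain ⟨k, hkD, hkK⟩ := hev.exists
    -- lsc for `T k - Λ`
    have hbdl : ∀ᶠ l in (↑UF : Filter ℕ),
        (∑' i, ‖(T k - T l) (ξ i)‖^2) ≤ θ/2 + (2*A)^2 * (1 / ((k:ℝ)+1)) := by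
      apply Filter.Eventually.filter_mono hUle
      filter_upwards [eventually_ge_atTop K₁] with l hl
      rw [← gns2_eq_tsum φ ξ hrep hξ]
      have h1 := L2 k l
      have h2 : (φnorm ψ (g k l * a - a * g k l))^2 ≤ θ/2 := by
        have h3 := hK₁ k l hkK hl
        have h4 : (φnorm ψ (g k l * a - a * g k l))^2 ≤ (Real.sqrt (θ/2))^2 := by
          exact pow_le_pow_left₀ (φnorm_nonneg ψ _) h3 2
        rwa [Real.sq_sqrt (by positivity : (0:ℝ) ≤ θ/2)] at h4
      linarith
    have hconvl : ∀ v η : H, Filter.Tendsto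
        (fun l => (inner ℂ v ((T k - T l) η) : ℂ)) ↑UF
        (nhds (inner ℂ v ((T k - Λ) η))) := by
      intro v η
      have e1 : ∀ S : BH H, (inner ℂ v ((T k - S) η) : ℂ) =
          inner ℂ v (T k η) - inner ℂ v (S η) := by
        intro S
        rw [ContinuousLinearMap.sub_apply, inner_sub_right]
      simp only [e1]
      exact tendsto_const_nhds.sub (hΛ v η)
    have hlsc := lsc_vec UF _ _ hconvl ξ hξ
      (by positivity) hbdl
    have h9 : gns2 φ (T k - Λ) ≤ θ/2 + (2*A)^2 * (1 / ((k:ℝ)+1)) := by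
      rw [gns2_eq_tsum φ ξ hrep hξ]
      exact hlsc
    -- transport back to ψ
    have hzmem : T k - c • 1 ∈ M := sub_mem (hTmem k) (M.smul_mem M.one_mem c)
    have htr := transport_gns2 (hutrans k) (hεpos k) hzmem
    have hzu : (T k - c • 1) * u k = u k * (a - c • 1) := by
      rw [sub_mul, mul_sub, hTdef]
      congr 1
      · simp only [mul_assoc, hc1, hc2, huu, huu', mul_one]
      · rw [smul_mul_assoc, one_mul, mul_smul_comm, mul_one]
    have h1 : gns2 ψ ((T k - c • 1) * u k) = gns2 ψ (a - c • 1) := by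
      rw [hzu, gns2_unitary_left ψ (huuni k)]
    have hznorm : ‖T k - c • 1‖ ≤ A + ‖c‖ := by
      calc ‖T k - c • 1‖ ≤ ‖T k‖ + ‖c • (1 : BH H)‖ := norm_sub_le _ _
        _ ≤ A + ‖c‖ * ‖(1 : BH H)‖ := by
            apply add_le_add (hTnorm k)
            rw [norm_smul]
        _ ≤ A + ‖c‖ * 1 := by
            apply add_le_add le_rfl
            apply mul_le_mul_of_nonneg_left ContinuousLinearMap.norm_id_le
              (norm_nonneg c)
        _ = A + ‖c‖ := by ring
    have h2 : |gns2 φ (T k - c • 1) - gns2 ψ (a - c • 1)| ≤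
        (A + ‖c‖)^2 * (1 / ((k:ℝ)+1)) := by
      rw [← h1]
      refine le_trans htr ?_
      apply mul_le_mul_of_nonneg_right _ (le_of_lt (hεpos k))
      nlinarith [norm_nonneg (T k - c • 1), hznorm, norm_nonneg c]
    have h3 := abs_le.mp h2
    have h4 : gns2 φ (T k - c • 1) = gns2 φ (T k - Λ) := by rw [hc]
    have h5 : gns2 ψ (a - c • 1) ≤ gns2 φ (T k - Λ) +
        (A + ‖c‖)^2 * (1 / ((k:ℝ)+1)) := by
      rw [← h4]
      linarith [h3.1]
    have h6 : D * (1 / ((k:ℝ)+1)) =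
        (2*A)^2 * (1 / ((k:ℝ)+1)) + (A + ‖c‖)^2 * (1 / ((k:ℝ)+1)) := by
      rw [hD]; ring
    calc gns2 ψ (a - c • 1)
        ≤ gns2 φ (T k - Λ) + (A + ‖c‖)^2 * (1 / ((k:ℝ)+1)) := h5
      _ ≤ θ/2 + (2*A)^2 * (1 / ((k:ℝ)+1)) + (A + ‖c‖)^2 * (1 / ((k:ℝ)+1)) := by
          linarith [h9]
      _ = θ/2 + D * (1 / ((k:ℝ)+1)) := by rw [h6]; ring
      _ ≤ θ/2 + θ/2 := by linarith [le_of_lt hkD]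
      _ = θ := by ring
  have hzero : gns2 ψ (a - c • 1) = 0 := by
    have hle : gns2 ψ (a - c • 1) ≤ 0 := by
      by_contra hpos
      push_neg at hpos
      have := key (gns2 ψ (a - c • 1) / 2) (by linarith)
      linarith
    exact le_antisymm hle (gns2_nonneg ψ _)
  have hnull : ψ.toFun (star (a - c • 1) * (a - c • 1)) = 0 := by
    apply Complex.ext
    · rw [Complex.zero_re]
      exact hzero
    · rw [Complex.zero_im]
      exact gns2_im ψ _
  have hdmem : a - c • 1 ∈ M := sub_mem haM (M.smul_mem M.one_mem c)
  have hd := ψ.faithful' (a - c • 1) hdmem hnull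
  exact ⟨c, by rwa [sub_eq_zero] at hd⟩

end Stmt10Proof

open Stmt10Proof in
/-- triviality of the bicentralizer is independent of the choice of normal
faithful state (via Connes–Størmer transitivity). -/
theorem stmt10
    {H : Type} [NormedAddCommGroup H] [InnerProductSpace ℂ H] [CompleteSpace H]
    [TopologicalSpace.SeparableSpace H]
    (M : VonNeumannAlgebra H) (hM : IsTypeIII₁Factor M)
    (φ ψ : NFState M) (hφ : Bicentralizer M φ = Scalars H) :
    Bicentralizer M ψ = Scalars H := by
  refine Set.Subset.antisymm (hard_inclusion hM.2.2 φ ψ hφ) ?_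
  · -- Easy inclusion: scalars always belong to the bicentralizer.
    rintro _ ⟨c, rfl⟩
    refine ⟨M.smul_mem M.one_mem c, ?_⟩
    intro x hx
    have h0 : ∀ n, φnorm ψ (x n * (c • 1) - (c • 1) * x n) = 0 := by
      intro n
      have hz : x n * (c • 1) - (c • 1) * x n = 0 := by
        simp [mul_smul_comm, smul_mul_assoc]
      rw [hz]
      simp [φnorm]
    simp only [h0]
    exact tendsto_const_nhds
end
end
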